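/- arXiv:2308.04878 — 6 statements merged into one kernel-verified Lean document; each statement's English description precedes it below -/
import Mathlib

section
/- Let p be an odd prime such that 2 generates (Z/p^2 Z)^×, let r ≥ 1 and n = p^r − 1. If f ∈ Z[X] is a monic polynomial of degree n with all coefficients in {±1}, and f = g·h with g, h ∈ Z[X] monic of positive degree, then min(deg g, deg h) ≤ p^{r−1} − 1 < n/p. -/
open Polynomial

/-- `N ∣ 2^b - 1` iff `2^b = 1` in `ZMod N`. -/
lemma aux_dvd_two_pow_sub_one_iff (N b : ℕ) [NeZero N] :
    N ∣ 2 ^ b - 1 ↔ (2 : ZMod N) ^ b = 1 := by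
  have h1 : 1 ≤ 2 ^ b := Nat.one_le_two_pow
  rw [← ZMod.natCast_eq_zero_iff, Nat.cast_sub h1]
  push_cast
  rw [sub_eq_zero]

/-- Key arithmetic lemma: if 2 is a primitive root mod `p^2` and `p^r ∣ 2^D - 1` with `D > 0`,
then `φ(p^r) = p^(r-1)*(p-1)` divides `D`. -/
lemma aux_keyA (p r D : ℕ) (hp : p.Prime) (hodd : Odd p)
    (h2 : orderOf (2 : ZMod (p ^ 2)) = Nat.totient (p ^ 2))
    (hr : 1 ≤ r) (hD : 0 < D) (hdvd : p ^ r ∣ 2 ^ D - 1) :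
    p ^ (r - 1) * (p - 1) ∣ D := by
  haveI : Fact p.Prime := ⟨hp⟩
  have hp2 : p ≠ 2 := by rintro rfl; exact (Nat.not_odd_iff_even.mpr even_two) hodd
  have hp3 : 3 ≤ p := by have := hp.two_le; omega
  haveI : NeZero p := ⟨by omega⟩
  haveI : NeZero (p ^ 2) := ⟨pow_ne_zero 2 (by omega)⟩
  have htot : (p ^ 2).totient = p * (p - 1) := by
    rw [Nat.totient_prime_pow hp (by norm_num)]; ring_nf
  have hnd2 : ¬ p ∣ 2 := fun hd => hp2 ((Nat.prime_dvd_prime_iff_eq hp Nat.prime_two).mp hd)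
  have hndpow : ∀ b : ℕ, ¬ p ∣ 2 ^ b := fun b hd => hnd2 (hp.dvd_of_dvd_pow hd)
  -- order of 2 mod p is p - 1
  set t := orderOf (2 : ZMod p) with ht_def
  have ht_dvd : t ∣ p - 1 := ZMod.orderOf_dvd_card_sub_one (a := (2 : ZMod p)) (by
    intro h0
    have : ((2 : ℕ) : ZMod p) = 0 := by push_cast; exact h0
    exact hnd2 ((ZMod.natCast_eq_zero_iff 2 p).mp this))
  have hpt : p ∣ 2 ^ t - 1 := by
    rw [aux_dvd_two_pow_sub_one_iff]
    exact pow_orderOf_eq_one (2 : ZMod p)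
  have hlte1 : emultiplicity p (2 ^ (t * p) - 1) =
      emultiplicity p (2 ^ t - 1) + emultiplicity p p := by
    have := Nat.emultiplicity_pow_sub_pow hp hodd (x := 2 ^ t) (y := 1) hpt (hndpow t) p
    rwa [one_pow, ← pow_mul] at this
  have hps : p ^ 2 ∣ 2 ^ (t * p) - 1 := by
    apply pow_dvd_of_le_emultiplicity
    rw [hlte1]
    have e1 : (1 : ℕ∞) ≤ emultiplicity p (2 ^ t - 1) := by
      have := le_emultiplicity_of_pow_dvd (k := 1) (by simpa using hpt)
      exact_mod_cast this
    have e2 : emultiplicity p p = 1 := by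
      simpa using emultiplicity_pow_self_of_prime hp.prime 1
    rw [e2]
    calc ((2 : ℕ) : ℕ∞) = 1 + 1 := by norm_num
    _ ≤ emultiplicity p (2 ^ t - 1) + 1 := by gcongr
  have hd2dvd : p * (p - 1) ∣ t * p := by
    rw [← htot, ← h2]
    apply orderOf_dvd_of_pow_eq_one
    exact (aux_dvd_two_pow_sub_one_iff (p ^ 2) (t * p)).mp hps
  have hpm1t : p - 1 ∣ t := by
    have : (p - 1) * p ∣ t * p := by rwa [mul_comm (p - 1) p]
    exact (Nat.mul_dvd_mul_iff_right (by omega : 0 < p)).mp this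
  have ht : t = p - 1 := Nat.dvd_antisymm ht_dvd hpm1t
  -- p - 1 divides D
  have hpD : p ∣ 2 ^ D - 1 := dvd_trans (dvd_pow_self p (by omega : r ≠ 0)) hdvd
  have hp1D : p - 1 ∣ D := by
    rw [← ht]
    exact orderOf_dvd_of_pow_eq_one ((aux_dvd_two_pow_sub_one_iff p D).mp hpD)
  -- decompose D
  set a := D.factorization p with ha_def
  set b := D / p ^ a with hb_def
  have hDab : p ^ a * b = D := Nat.ordProj_mul_ordCompl_eq_self D p
  have hpb : ¬ p ∣ b := Nat.not_dvd_ordCompl hp hD.ne'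
  have hcop : Nat.Coprime (p - 1) p := by
    apply Nat.Coprime.symm
    refine (Nat.Prime.coprime_iff_not_dvd hp).mpr fun hdd => ?_
    exact absurd (Nat.le_of_dvd (by omega) hdd) (by omega)
  have hp1b : p - 1 ∣ b := by
    apply Nat.Coprime.dvd_of_dvd_mul_left (k := p - 1) (m := p ^ a)
    · exact (hcop.pow_right a)
    · rwa [hDab]
  have hpb1 : p ∣ 2 ^ b - 1 := by
    obtain ⟨c, hc⟩ := hp1b
    have h1 : 2 ^ (p - 1) - 1 ∣ 2 ^ b - 1 := by
      rw [hc, pow_mul]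
      simpa using Nat.sub_dvd_pow_sub_pow (2 ^ (p - 1)) 1 c
    have h2' : p ∣ 2 ^ (p - 1) - 1 := by rw [← ht]; exact hpt
    exact h2'.trans h1
  have hnp2b : ¬ p ^ 2 ∣ 2 ^ b - 1 := by
    intro hcon
    have : p * (p - 1) ∣ b := by
      rw [← htot, ← h2]
      exact orderOf_dvd_of_pow_eq_one ((aux_dvd_two_pow_sub_one_iff (p ^ 2) b).mp hcon)
    exact hpb ((dvd_mul_right p (p - 1)).trans this)
  have hmult1 : emultiplicity p (2 ^ b - 1) = 1 := by
    have h1 : p ^ 1 ∣ 2 ^ b - 1 := by simpa using hpb1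
    have hres := emultiplicity_eq_of_dvd_of_not_dvd h1 (by simpa using hnp2b)
    simpa using hres
  have hlte2 : emultiplicity p (2 ^ D - 1) = 1 + (a : ℕ∞) := by
    have := Nat.emultiplicity_pow_sub_pow hp hodd (x := 2 ^ b) (y := 1) hpb1 (hndpow b) (p ^ a)
    rw [one_pow, ← pow_mul, mul_comm b (p ^ a), hDab] at this
    rw [this, hmult1, emultiplicity_pow_self_of_prime hp.prime a]
  have hra : r ≤ 1 + a := by
    have hle : (r : ℕ∞) ≤ emultiplicity p (2 ^ D - 1) := le_emultiplicity_of_pow_dvd hdvd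
    rw [hlte2] at hle
    exact_mod_cast hle
  have hpr1D : p ^ (r - 1) ∣ D := by
    calc p ^ (r - 1) ∣ p ^ a := pow_dvd_pow p (by omega)
    _ ∣ D := Dvd.intro b hDab
  exact Nat.Coprime.mul_dvd_of_dvd_of_dvd ((hcop.symm.pow_left (r - 1))) hpr1D hp1D

/-- Any irreducible factor of `cyclotomic (p^r)` over `ZMod 2` has degree at least `φ(p^r)`,
given that 2 is a primitive root mod `p^2`. -/
lemma aux_degree_lb (p r : ℕ) (hp : p.Prime) (hodd : Odd p)
    (h2 : orderOf (2 : ZMod (p ^ 2)) = Nat.totient (p ^ 2)) (hr : 1 ≤ r)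
    (q : (ZMod 2)[X]) (hqm : q.Monic) (hqirr : Irreducible q)
    (hqdvd : q ∣ cyclotomic (p ^ r) (ZMod 2)) :
    p ^ (r - 1) * (p - 1) ≤ q.natDegree := by
  classical
  haveI : Fact (Irreducible q) := ⟨hqirr⟩
  have hqne : q ≠ 0 := hqm.ne_zero
  set K := AdjoinRoot q with hK
  let pb : PowerBasis (ZMod 2) K := AdjoinRoot.powerBasis hqne
  haveI : Module.Finite (ZMod 2) K := Module.Finite.of_basis pb.basis
  haveI : Finite K := Module.finite_of_finite (ZMod 2)
  haveI : Fintype K := Fintype.ofFinite K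
  have hcard : Fintype.card K = 2 ^ q.natDegree := by
    rw [Module.card_fintype pb.basis, ZMod.card]
    congr 1
    simp [pb, AdjoinRoot.powerBasis_dim hqne]
  -- the root is a primitive p^r-th root of unity
  have hchar : CharP K 2 :=
    charP_of_injective_algebraMap (algebraMap (ZMod 2) K).injective 2
  haveI : NeZero ((p ^ r : ℕ) : K) := by
    constructor
    rw [Ne, CharP.cast_eq_zero_iff K 2]
    intro hcon
    have : (2 : ℕ) ∣ p := Nat.Prime.dvd_of_dvd_pow Nat.prime_two hcon
    have hpe : p = 2 := ((Nat.prime_dvd_prime_iff_eq Nat.prime_two hp).mp this).symm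
    rw [hpe] at hodd
    exact (Nat.not_odd_iff_even.mpr even_two) hodd
  have hroot : IsRoot (cyclotomic (p ^ r) K) (AdjoinRoot.root q) := by
    have h1 : IsRoot (q.map (algebraMap (ZMod 2) K)) (AdjoinRoot.root q) :=
      AdjoinRoot.isRoot_root q
    have h2' : q.map (algebraMap (ZMod 2) K) ∣ cyclotomic (p ^ r) K := by
      rw [← map_cyclotomic (p ^ r) (algebraMap (ZMod 2) K)]
      exact Polynomial.map_dvd _ hqdvd
    exact h1.dvd h2'
  have hprim : IsPrimitiveRoot (AdjoinRoot.root q) (p ^ r) :=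
    (Polynomial.isRoot_cyclotomic_iff).mp hroot
  have hprpos : 0 < p ^ r := pow_pos hp.pos r
  have hzne : AdjoinRoot.root q ≠ 0 := by
    intro h0
    have := hprim.pow_eq_one
    rw [h0, zero_pow hprpos.ne'] at this
    exact zero_ne_one this
  have hdvd : p ^ r ∣ 2 ^ q.natDegree - 1 := by
    have h1 : (AdjoinRoot.root q) ^ (Fintype.card K - 1) = 1 :=
      FiniteField.pow_card_sub_one_eq_one _ hzne
    have h2' : orderOf (AdjoinRoot.root q) ∣ Fintype.card K - 1 :=
      orderOf_dvd_of_pow_eq_one h1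
    rw [← hprim.eq_orderOf, hcard] at h2'
    exact h2'
  have hDpos : 0 < q.natDegree := by
    rcases Nat.eq_zero_or_pos q.natDegree with h0 | h0
    · exact absurd (hqm.natDegree_eq_zero.mp h0 ▸ isUnit_one) hqirr.not_isUnit
    · exact h0
  exact Nat.le_of_dvd hDpos (aux_keyA p r q.natDegree hp hodd h2 hr hDpos hdvd)

/-- If `p` is an odd prime with 2 generating `(ZMod (p^2))ˣ`, `n = p^r - 1`, and a monic
Littlewood polynomial `f` of degree `n` factors as `g * h` with `g, h` monic of positive
degree, then `min (deg g) (deg h) ≤ p^(r-1) - 1 < n / p`. -/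
theorem stmt3 (p r n : ℕ) (hp : p.Prime) (hodd : Odd p)
    (h2 : orderOf (2 : ZMod (p ^ 2)) = Nat.totient (p ^ 2))
    (hr : 1 ≤ r) (hn : n = p ^ r - 1)
    (f g h : ℤ[X]) (hf : f.Monic) (hdeg : f.natDegree = n)
    (hcoeff : ∀ i ≤ n, f.coeff i = 1 ∨ f.coeff i = -1)
    (hgm : g.Monic) (hhm : h.Monic) (hg : 0 < g.natDegree) (hh : 0 < h.natDegree)
    (hfactor : f = g * h) :
    min g.natDegree h.natDegree ≤ p ^ (r - 1) - 1 ∧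
      ((p ^ (r - 1) - 1 : ℕ) : ℝ) < (n : ℝ) / p := by
  classical
  have hp3 : 3 ≤ p := by
    have := hp.two_le
    rcases Nat.lt_or_ge p 3 with hlt | hge
    · interval_cases p
      · exact absurd hodd (by decide)
    · exact hge
  have hprpos : 0 < p ^ r := pow_pos hp.pos r
  have hB1 : 1 ≤ p ^ (r - 1) := Nat.one_le_pow _ _ hp.pos
  have hBA : p ^ (r - 1) * p = p ^ r := by
    rw [← pow_succ]; congr 1; omega
  have hBle : p ^ (r - 1) ≤ p ^ r := Nat.pow_le_pow_right hp.pos (by omega)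
  constructor
  · -- main part
    let φ := Int.castRingHom (ZMod 2)
    have hn1 : n + 1 = p ^ r := by omega
    have hmap : f.map φ = ∑ i ∈ Finset.range (p ^ r), X ^ i := by
      ext k
      rw [coeff_map]
      have hrhs : (∑ i ∈ Finset.range (p ^ r), (X : (ZMod 2)[X]) ^ i).coeff k =
          if k < p ^ r then 1 else 0 := by
        simp [finset_sum_coeff, coeff_X_pow, Finset.sum_ite_eq, Finset.mem_range]
      rw [hrhs]
      by_cases hk : k ≤ n
      · rw [if_pos (by omega)]
        rcases hcoeff k hk with h1 | h1 <;> rw [h1] <;> simp <;> decide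
      · rw [if_neg (by omega), coeff_eq_zero_of_natDegree_lt (by omega : f.natDegree < k)]
        simp
    have hc_dvd : cyclotomic (p ^ r) (ZMod 2) ∣ f.map φ := by
      rw [hmap, ← prod_cyclotomic_eq_geom_sum hprpos]
      apply Finset.dvd_prod_of_mem
      rw [Finset.mem_erase, Nat.mem_divisors]
      refine ⟨?_, dvd_rfl, hprpos.ne'⟩
      have : 3 ≤ p ^ r := by
        calc 3 ≤ p := hp3
        _ = p ^ 1 := (pow_one p).symm
        _ ≤ p ^ r := Nat.pow_le_pow_right hp.pos hr
      omega
    have hnotunit : ¬ IsUnit (cyclotomic (p ^ r) (ZMod 2)) := by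
      intro hu
      have h0 := natDegree_eq_zero_of_isUnit hu
      rw [natDegree_cyclotomic] at h0
      exact (Nat.totient_pos.mpr hprpos).ne' h0
    obtain ⟨q, hqm, hqirr, hqdvd⟩ :=
      (cyclotomic (p ^ r) (ZMod 2)).exists_monic_irreducible_factor hnotunit
    have hDlb : p ^ (r - 1) * (p - 1) ≤ q.natDegree :=
      aux_degree_lb p r hp hodd h2 hr q hqm hqirr hqdvd
    have hqprime : Prime q := UniqueFactorizationMonoid.irreducible_iff_prime.mp hqirr
    have hqf : q ∣ (g.map φ) * (h.map φ) := by
      rw [← Polynomial.map_mul, ← hfactor]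
      exact hqdvd.trans hc_dvd
    have hsum : g.natDegree + h.natDegree = n := by
      rw [← hdeg, hfactor, natDegree_mul hgm.ne_zero hhm.ne_zero]
    have htotval : p ^ (r - 1) * (p - 1) = p ^ r - p ^ (r - 1) := by
      have : p ^ (r - 1) * (p - 1) + p ^ (r - 1) = p ^ r := by
        rw [Nat.mul_sub_one, Nat.sub_add_cancel]
        · exact hBA
        · calc p ^ (r - 1) ≤ p ^ (r - 1) * p := Nat.le_mul_of_pos_right _ hp.pos
          _ = p ^ (r - 1) * p := rfl
      omega
    rcases hqprime.2.2 _ _ hqf with hcase | hcase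
    · -- q divides g mod 2
      have hle : q.natDegree ≤ (g.map φ).natDegree :=
        natDegree_le_of_dvd hcase (hgm.map φ).ne_zero
      rw [hgm.natDegree_map] at hle
      have : min g.natDegree h.natDegree ≤ h.natDegree := min_le_right _ _
      omega
    · have hle : q.natDegree ≤ (h.map φ).natDegree :=
        natDegree_le_of_dvd hcase (hhm.map φ).ne_zero
      rw [hhm.natDegree_map] at hle
      have : min g.natDegree h.natDegree ≤ g.natDegree := min_le_left _ _
      omega
  · -- numeric part
    have hppos : (0 : ℝ) < p := by positivity
    rw [lt_div_iff₀ hppos, hn]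
    have hc1 : ((p ^ (r - 1) - 1 : ℕ) : ℝ) = (p : ℝ) ^ (r - 1) - 1 := by
      push_cast [Nat.cast_sub hB1]; ring
    have hc2 : ((p ^ r - 1 : ℕ) : ℝ) = (p : ℝ) ^ r - 1 := by
      push_cast [Nat.cast_sub (Nat.one_le_of_lt hprpos)]; ring
    rw [hc1, hc2]
    have hBAr : (p : ℝ) ^ (r - 1) * p = (p : ℝ) ^ r := by exact_mod_cast congrArg (Nat.cast : ℕ → ℝ) hBA
    have hp3r : (3 : ℝ) ≤ (p : ℝ) := by exact_mod_cast hp3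
    nlinarith [hBAr, hp3r]
end

section
/- Let n+1 be a power of 2. The map sending a monic Littlewood polynomial f of degree n to g mod 4, where g(X) = f(X+1), is a bijection from the set of 2^n monic Littlewood polynomials of degree n onto the set of monic degree-n polynomials in (Z/4Z)[X] whose reduction in (Z/2Z)[X] equals X^n. -/
open Polynomial Finset

private lemma lemA (n m : ℕ) (hm : n + 1 = 2 ^ m) :
    (X + 1 : (ZMod 2)[X]) ^ n = ∑ i ∈ range (n+1), X ^ i := by
  have hX : (X + 1 : (ZMod 2)[X]) ≠ 0 := by
    intro h
    have := congrArg (fun p => coeff p 0) h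
    simp at this
  apply mul_left_cancel₀ hX
  have h1 : (X + 1 : (ZMod 2)[X]) * (X+1)^n = (X+1)^(n+1) := by ring
  rw [h1, hm, add_pow_char_pow, one_pow, ← hm]
  have h2 := mul_geom_sum (X : (ZMod 2)[X]) (n+1)
  rw [CharTwo.sub_eq_add, CharTwo.sub_eq_add] at h2
  rw [add_comm (X:(ZMod 2)[X]) 1] at h2 ⊢
  rw [← h2]

private lemma coeffSum (e : ℕ → ℤ) (N j : ℕ) :
    (∑ i ∈ range N, C (e i) * X ^ i).coeff j = if j < N then e j else 0 := by
  rw [finset_sum_coeff]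
  simp only [coeff_C_mul, coeff_X_pow, mul_ite, mul_one, mul_zero]
  rw [Finset.sum_ite_eq (range N) j e]
  simp

/-- For `n + 1` a power of 2, the map `f ↦ (f(X+1) mod 4)` is a bijection from monic
Littlewood polynomials of degree `n` onto monic degree-`n` polynomials over `ZMod 4`
reducing to `X^n` over `ZMod 2`: every such target polynomial has a unique preimage. -/
theorem stmt8 (n m : ℕ) (hm : n + 1 = 2 ^ m) :
    ∀ q : (ZMod 4)[X], q.Monic → q.natDegree = n →
      q.map (ZMod.castHom (by norm_num : (2:ℕ) ∣ 4) (ZMod 2)) = X ^ n →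
      ∃! f : ℤ[X],
        (f.Monic ∧ f.natDegree = n ∧ ∀ i ≤ n, f.coeff i = 1 ∨ f.coeff i = -1) ∧
          (f.comp (X + 1)).map (Int.castRingHom (ZMod 4)) = q := by
  intro q hq hdeg hq2
  set ψ := ZMod.castHom (by norm_num : (2:ℕ) ∣ 4) (ZMod 2) with hψ
  set φ := Int.castRingHom (ZMod 4) with hφ
  set p : (ZMod 4)[X] := q.comp (X + C (-1)) with hp
  -- p mod 2 = (X+1)^n
  have hmap : p.map ψ = (X + 1 : (ZMod 2)[X]) ^ n := by
    rw [hp, map_comp, hq2]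
    have : (X + C (-1) : (ZMod 4)[X]).map ψ = X + 1 := by
      simp [CharTwo.neg_eq]
    rw [this, X_pow_comp]
  -- p is monic of degree n
  have hpm : p.Monic := hq.comp_X_add_C (-1)
  have hpd : p.natDegree = n := by
    rw [hp, ← taylor_apply, natDegree_taylor, hdeg]
  -- coefficients of p are 1 or 3
  have h13 : ∀ i ≤ n, p.coeff i = 1 ∨ p.coeff i = 3 := by
    intro i hi
    have h1 : ψ (p.coeff i) = 1 := by
      have := congrArg (fun r => coeff r i) hmap
      simp only [coeff_map] at this
      rw [this, lemA n m hm, finset_sum_coeff]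
      simp only [coeff_X_pow]
      rw [Finset.sum_ite_eq (range (n+1)) i (fun _ => (1 : ZMod 2))]
      simp [Nat.lt_succ_of_le hi]
    revert h1
    have : ∀ x : ZMod 4, ψ x = 1 → x = 1 ∨ x = 3 := by rw [hψ]; decide
    exact this _
  have hpn : p.coeff n = 1 := by rw [← hpd]; exact hpm
  -- define f
  set e : ℕ → ℤ := fun i => if p.coeff i = 1 then 1 else -1 with he
  set f : ℤ[X] := ∑ i ∈ range (n+1), C (e i) * X ^ i with hf
  have hfc : ∀ j, f.coeff j = if j < n+1 then e j else 0 := fun j => coeffSum e (n+1) j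
  have hfn : f.coeff n = 1 := by rw [hfc]; simp [he, hpn]
  have hfd : f.natDegree = n := by
    apply le_antisymm
    · apply natDegree_le_iff_coeff_eq_zero.mpr
      intro j hj
      rw [hfc]
      simp [Nat.not_lt.mpr hj]
    · exact le_natDegree_of_ne_zero (by rw [hfn]; norm_num)
  have hfm : f.Monic := by rw [Monic, leadingCoeff, hfd, hfn]
  -- f maps to p mod 4
  have hφe : ∀ i ≤ n, φ (e i) = p.coeff i := by
    intro i hi
    rcases h13 i hi with h | h <;> simp [he, h, hφ] <;> decide
  have hfmap : f.map φ = p := by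
    ext j
    rw [coeff_map, hfc]
    by_cases hj : j < n + 1
    · rw [if_pos hj]; exact hφe j (Nat.lt_succ_iff.mp hj)
    · rw [if_neg hj, map_zero]
      exact (coeff_eq_zero_of_natDegree_lt (by omega : p.natDegree < j)).symm
  refine ⟨f, ⟨⟨hfm, hfd, fun i hi => ?_⟩, ?_⟩, ?_⟩
  · rw [hfc, if_pos (Nat.lt_succ_of_le hi), he]
    beta_reduce
    split <;> simp
  · -- composition maps to q
    have hX1 : (X + 1 : ℤ[X]).map φ = X + 1 := by simp
    rw [map_comp, hX1, hfmap, hp, comp_assoc]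
    have : (X + C (-1) : (ZMod 4)[X]).comp (X + 1) = X := by
      simp [add_comp]
    rw [this, comp_X]
  · -- uniqueness
    rintro g ⟨⟨hgm, hgd, hgc⟩, hgq⟩
    have hgmap : g.map φ = p := by
      have h2 : ((g.comp (X+1)).map φ).comp (X + C (-1)) = p := by rw [hgq]
      rw [← h2, map_comp, comp_assoc]
      have h3 : ((X+1 : ℤ[X]).map φ).comp (X + C (-1)) = X := by
        simp [add_comp]
      rw [h3, comp_X]
    ext j
    have hgj : φ (g.coeff j) = p.coeff j := by rw [← coeff_map, hgmap]
    rw [hfc]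
    by_cases hj : j < n + 1
    · rw [if_pos hj, he]
      beta_reduce
      have hj' : j ≤ n := Nat.lt_succ_iff.mp hj
      rcases hgc j hj' with h | h <;> rw [h] at hgj ⊢
      · rw [if_pos (by rw [← hgj, hφ]; decide)]
      · rw [if_neg (by rw [← hgj, hφ]; decide)]
    · rw [if_neg hj]
      exact coeff_eq_zero_of_natDegree_lt (by omega)
end

section
/- Let g ∈ Z[X] be monic of degree n with g(X) = X^n + Σ_{i=0}^{n−1} g_i X^i where all g_i are even. Suppose i is the least index with g_i ≡ 2 (mod 4) (assuming such an index exists). Then g has an irreducible factor over Q of degree at least n − i. -/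
open Polynomial

lemma mod4_iff (x : ℤ) : x % 4 = 2 ↔ (x : ZMod 4) = 2 := by
  have : ((2:ℤ) : ZMod 4) = 2 := by norm_num
  rw [show (2 : ZMod 4) = ((2:ℤ) : ZMod 4) from this.symm, ZMod.intCast_eq_intCast_iff]
  unfold Int.ModEq
  omega

-- Lemma A: factors of an "all even" monic product have all even non-leading coeffs
lemma evenA {a b : ℤ[X]} (ha : a.Monic) (hb : b.Monic)
    (heven : ∀ j < a.natDegree + b.natDegree, (2:ℤ) ∣ (a*b).coeff j) :
    ∀ j < a.natDegree, (2:ℤ) ∣ a.coeff j := by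
  set φ := Int.castRingHom (ZMod 2)
  have hmap : (a*b).map φ = X ^ (a.natDegree + b.natDegree) := by
    have hm : (a*b).Monic := ha.mul hb
    have hd : (a*b).natDegree = a.natDegree + b.natDegree := ha.natDegree_mul hb
    ext k
    rw [coeff_map, coeff_X_pow]
    rcases lt_trichotomy k (a.natDegree + b.natDegree) with h | h | h
    · simp only [if_neg h.ne]
      exact (ZMod.intCast_zmod_eq_zero_iff_dvd _ 2).2 (heven k h)
    · simp [h, ← hd, hm.coeff_natDegree]
    · rw [if_neg h.ne', coeff_eq_zero_of_natDegree_lt (hd ▸ h), map_zero]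
  have hdvd : a.map φ ∣ X ^ (a.natDegree + b.natDegree) := by
    rw [← hmap, Polynomial.map_mul]; exact Dvd.intro _ rfl
  obtain ⟨k, hk, hassoc⟩ := (dvd_prime_pow prime_X _).1 hdvd
  have heq : a.map φ = X ^ k := eq_of_monic_of_associated (ha.map φ) (monic_X_pow k) hassoc
  have hkeq : k = a.natDegree := by
    have := congrArg natDegree heq
    rw [ha.natDegree_map, natDegree_X_pow] at this; omega
  intro j hj
  have : (a.map φ).coeff j = 0 := by
    rw [heq, coeff_X_pow, if_neg]; omega
  rw [coeff_map] at this
  exact (ZMod.intCast_zmod_eq_zero_iff_dvd _ 2).1 this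

-- Lemma B: locate a coefficient ≡ 2 mod 4 in one of the factors
lemma locB {a b : ℤ[X]} (ha : a.Monic) (hb : b.Monic)
    (hea : ∀ j < a.natDegree, (2:ℤ) ∣ a.coeff j)
    (heb : ∀ j < b.natDegree, (2:ℤ) ∣ b.coeff j)
    {i : ℕ} (hi : i < a.natDegree + b.natDegree)
    (hgi : (a*b).coeff i % 4 = 2) :
    (b.natDegree ≤ i ∧ a.coeff (i - b.natDegree) % 4 = 2) ∨
    (a.natDegree ≤ i ∧ b.coeff (i - a.natDegree) % 4 = 2) := by
  set da := a.natDegree with hda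
  set db := b.natDegree with hdb
  have hsum : ((a*b).coeff i : ZMod 4)
      = ∑ p ∈ Finset.HasAntidiagonal.antidiagonal i, ((a.coeff p.1 : ZMod 4) * (b.coeff p.2 : ZMod 4)) := by
    rw [coeff_mul]; push_cast; rfl
  have hz : ∀ p ∈ Finset.HasAntidiagonal.antidiagonal i, p.1 ≠ da → p.2 ≠ db →
      ((a.coeff p.1 : ZMod 4) * (b.coeff p.2 : ZMod 4)) = 0 := by
    rintro ⟨x, y⟩ hxy hx hy
    simp only [Finset.HasAntidiagonal.mem_antidiagonal] at hxy
    rcases lt_or_gt_of_ne hx with h1 | h1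
    · rcases lt_or_gt_of_ne hy with h2 | h2
      · obtain ⟨u, hu⟩ := hea x h1
        obtain ⟨v, hv⟩ := heb y h2
        rw [← Int.cast_mul, hu, hv,
          show 2*u*(2*v) = 4*(u*v) by ring, Int.cast_mul]
        have h4 : ((4:ℤ) : ZMod 4) = 0 := by decide
        rw [h4, zero_mul]
      · rw [coeff_eq_zero_of_natDegree_lt h2, Int.cast_zero, mul_zero]
    · rw [coeff_eq_zero_of_natDegree_lt h1, Int.cast_zero, zero_mul]
  have h2 : ((a*b).coeff i : ZMod 4) = 2 := (mod4_iff _).1 hgi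
  rw [hsum] at h2
  by_cases hia : da ≤ i
  · by_cases hib : db ≤ i
    · -- two terms
      have hne : ((i - db, db) : ℕ × ℕ) ≠ (da, i - da) := by
        intro h
        have := congrArg Prod.fst h
        simp only at this
        omega
      have hmem1 : ((i - db, db) : ℕ × ℕ) ∈ Finset.HasAntidiagonal.antidiagonal i := by
        simp [Finset.HasAntidiagonal.mem_antidiagonal]; omega
      have hmem2 : ((da, i - da) : ℕ × ℕ) ∈ Finset.HasAntidiagonal.antidiagonal i := by
        simp [Finset.HasAntidiagonal.mem_antidiagonal]; omega
      have hsub : ({((i - db, db) : ℕ × ℕ), (da, i - da)} : Finset (ℕ × ℕ))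
          ⊆ Finset.HasAntidiagonal.antidiagonal i := by
        intro p hp
        simp only [Finset.mem_insert, Finset.mem_singleton] at hp
        rcases hp with h | h <;> subst h <;> assumption
      rw [← Finset.sum_subset hsub (by
        intro p hp hnp
        simp only [Finset.mem_insert, Finset.mem_singleton, not_or] at hnp
        refine hz p hp ?_ ?_
        · intro h; exact hnp.2 (by
            have := Finset.HasAntidiagonal.mem_antidiagonal.1 hp
            ext <;> simp <;> omega)
        · intro h; exact hnp.1 (by
            have := Finset.HasAntidiagonal.mem_antidiagonal.1 hp
            ext <;> simp <;> omega))] at h2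
      rw [Finset.sum_pair hne] at h2
      simp only [ha.coeff_natDegree, hb.coeff_natDegree, ← hda, ← hdb] at h2
      push_cast at h2
      rw [show a.coeff da = 1 from ha.coeff_natDegree, show b.coeff db = 1 from hb.coeff_natDegree,
        Int.cast_one, mul_one, one_mul] at h2
      rw [← Int.cast_add] at h2
      have hsum2 : (a.coeff (i - db) + b.coeff (i - da)) % 4 = 2 := (mod4_iff _).2 h2
      have e1 : (2:ℤ) ∣ a.coeff (i - db) := hea _ (by omega)
      have e2 : (2:ℤ) ∣ b.coeff (i - da) := heb _ (by omega)
      obtain ⟨u, hu⟩ := e1; obtain ⟨v, hv⟩ := e2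
      rw [hu, hv] at hsum2 ⊢
      omega
    · -- only (da, i - da)
      push_neg at hib
      have hmem : ((da, i - da) : ℕ × ℕ) ∈ Finset.HasAntidiagonal.antidiagonal i := by
        simp [Finset.HasAntidiagonal.mem_antidiagonal]; omega
      rw [Finset.sum_eq_single_of_mem _ hmem (by
        intro p hp hne
        have hpa := Finset.HasAntidiagonal.mem_antidiagonal.1 hp
        refine hz p hp ?_ ?_
        · intro h; exact hne (by ext <;> simp <;> omega)
        · intro h; omega)] at h2
      rw [show a.coeff da = 1 from ha.coeff_natDegree] at h2
      rw [Int.cast_one, one_mul] at h2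
      exact Or.inr ⟨hia, (mod4_iff _).2 h2⟩
  · push_neg at hia
    by_cases hib : db ≤ i
    · have hmem : ((i - db, db) : ℕ × ℕ) ∈ Finset.HasAntidiagonal.antidiagonal i := by
        simp [Finset.HasAntidiagonal.mem_antidiagonal]; omega
      rw [Finset.sum_eq_single_of_mem _ hmem (by
        intro p hp hne
        have hpa := Finset.HasAntidiagonal.mem_antidiagonal.1 hp
        refine hz p hp ?_ ?_
        · intro h; omega
        · intro h; exact hne (by ext <;> simp <;> omega))] at h2
      rw [show b.coeff db = 1 from hb.coeff_natDegree] at h2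
      rw [Int.cast_one, mul_one] at h2
      exact Or.inl ⟨hib, (mod4_iff _).2 h2⟩
    · push_neg at hib
      exfalso
      rw [Finset.sum_eq_zero (by
        intro p hp
        have hpa := Finset.HasAntidiagonal.mem_antidiagonal.1 hp
        exact hz p hp (by omega) (by omega))] at h2
      exact absurd h2.symm (by decide)

lemma main_ind : ∀ n : ℕ, ∀ g : ℤ[X], g.Monic → g.natDegree = n →
    (∀ j < n, (2:ℤ) ∣ g.coeff j) → ∀ i < n, g.coeff i % 4 = 2 →
    ∃ q : ℚ[X], Irreducible q ∧ q ∣ g.map (Int.castRingHom ℚ) ∧ n - i ≤ q.natDegree := by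
  intro n
  induction n using Nat.strong_induction_on with
  | _ n IH =>
  intro g hg hdeg heven i hi hgi
  by_cases hirr : Irreducible (g.map (Int.castRingHom ℚ))
  · refine ⟨_, hirr, dvd_rfl, ?_⟩
    rw [hg.natDegree_map, hdeg]
    omega
  · have hprim : g.IsPrimitive := hg.isPrimitive
    have hgirr : ¬ Irreducible g := fun h =>
      hirr ((Polynomial.IsPrimitive.Int.irreducible_iff_irreducible_map_cast hprim).1 h)
    have hgu : ¬ IsUnit g := by
      intro h
      have := natDegree_eq_zero_of_isUnit h
      omega
    have key : ∀ a b : ℤ[X], a.Monic → b.Monic → g = a * b → ¬ IsUnit a → ¬ IsUnit b →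
        ∃ q : ℚ[X], Irreducible q ∧ q ∣ g.map (Int.castRingHom ℚ) ∧ n - i ≤ q.natDegree := by
      intro a b ha hb hab hua hub
      have hda : 1 ≤ a.natDegree := by
        by_contra h
        exact hua (by rw [ha.natDegree_eq_zero.1 (by omega)]; exact isUnit_one)
      have hdb : 1 ≤ b.natDegree := by
        by_contra h
        exact hub (by rw [hb.natDegree_eq_zero.1 (by omega)]; exact isUnit_one)
      have hn : a.natDegree + b.natDegree = n := by
        rw [← hdeg, hab, ha.natDegree_mul hb]
      have hea : ∀ j < a.natDegree, (2:ℤ) ∣ a.coeff j :=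
        evenA ha hb (fun j hj => by rw [← hab]; exact heven j (by omega))
      have heb : ∀ j < b.natDegree, (2:ℤ) ∣ b.coeff j :=
        evenA hb ha (fun j hj => by rw [mul_comm, ← hab]; exact heven j (by omega))
      have hloc := locB ha hb hea heb (i := i) (by omega) (by rw [← hab]; exact hgi)
      rcases hloc with ⟨hbi, hmod⟩ | ⟨hai, hmod⟩
      · obtain ⟨q, hq, hdvd, hle⟩ := IH a.natDegree (by omega) a ha rfl hea
          (i - b.natDegree) (by omega) hmod
        refine ⟨q, hq, hdvd.trans (Polynomial.map_dvd _ ⟨b, hab⟩), by omega⟩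
      · obtain ⟨q, hq, hdvd, hle⟩ := IH b.natDegree (by omega) b hb rfl heb
          (i - a.natDegree) (by omega) hmod
        refine ⟨q, hq, hdvd.trans (Polynomial.map_dvd _ ⟨a, by rw [hab, mul_comm]⟩), by omega⟩
    rw [irreducible_iff] at hgirr
    push_neg at hgirr
    obtain ⟨a, b, hab, hua, hub⟩ := hgirr hgu
    have hlc : a.leadingCoeff * b.leadingCoeff = 1 := by
      rw [← leadingCoeff_mul, ← hab]; exact hg.leadingCoeff
    rcases Int.mul_eq_one_iff_eq_one_or_neg_one.1 hlc with ⟨h1, h2⟩ | ⟨h1, h2⟩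
    · exact key a b h1 h2 hab hua hub
    · refine key (-a) (-b) ?_ ?_ (by rw [hab]; ring) ?_ ?_
      · unfold Monic; rw [leadingCoeff_neg, h1]; ring
      · unfold Monic; rw [leadingCoeff_neg, h2]; ring
      · rw [IsUnit.neg_iff]; exact hua
      · rw [IsUnit.neg_iff]; exact hub


/-- If `g ∈ ℤ[X]` is monic of degree `n` with all non-leading coefficients even, and `i`
is the least index with `g_i ≡ 2 (mod 4)`, then `g` has an irreducible factor over `ℚ`
of degree at least `n - i`. -/
theorem stmt9 (n : ℕ) (g : ℤ[X]) (hg : g.Monic) (hdeg : g.natDegree = n)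
    (heven : ∀ j < n, (2 : ℤ) ∣ g.coeff j)
    (i : ℕ) (hi : i < n) (hgi : g.coeff i % 4 = 2)
    (hleast : ∀ j < i, g.coeff j % 4 ≠ 2) :
    ∃ q : ℚ[X], Irreducible q ∧ q ∣ g.map (Int.castRingHom ℚ) ∧
      n - i ≤ q.natDegree := by
  exact main_ind n g hg hdeg heven i hi hgi
end

section
/- For every n ≥ 1 there exists a polynomial of degree n with all coefficients in {−1, +1} that is irreducible over Q. -/
open Polynomial Finset

noncomputable def fpoly (n : ℕ) : ℤ[X] := X^n - ∑ i ∈ range n, X^i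

lemma fpoly_coeff_lt (n i : ℕ) (h : i < n) : (fpoly n).coeff i = -1 := by
  simp [fpoly, Polynomial.finset_sum_coeff, Polynomial.coeff_X_pow, h, Nat.ne_of_lt h]

lemma fpoly_coeff_self (n : ℕ) : (fpoly n).coeff n = 1 := by
  simp [fpoly, Polynomial.finset_sum_coeff, Polynomial.coeff_X_pow]

lemma geom_deg (n : ℕ) : (∑ i ∈ range n, (X:ℤ[X])^i).degree < (n:ℕ) := by
  apply lt_of_le_of_lt (Polynomial.degree_sum_le _ _)
  rw [Finset.sup_lt_iff (by exact_mod_cast WithBot.bot_lt_coe n)]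
  intro i hi
  exact lt_of_le_of_lt (Polynomial.degree_X_pow_le i)
    (by exact_mod_cast Nat.cast_lt.mpr (Finset.mem_range.mp hi))

lemma fpoly_monic (n : ℕ) : (fpoly n).Monic :=
  Polynomial.monic_X_pow_sub (geom_deg n)

lemma fpoly_natDegree (n : ℕ) : (fpoly n).natDegree = n := by
  have h1 : (fpoly n).degree = n := by
    rw [fpoly, Polynomial.degree_sub_eq_left_of_degree_lt]
    · exact Polynomial.degree_X_pow n
    · rw [Polynomial.degree_X_pow]; exact geom_deg n
  exact Polynomial.natDegree_eq_of_degree_eq_some h1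

lemma fpoly_mul_id (n : ℕ) : fpoly n * (X - 1) = X^(n+1) - 2*X^n + 1 := by
  rw [fpoly, sub_mul, geom_sum_mul]
  ring

lemma fpoly_map_eval (n : ℕ) (z : ℂ) :
    eval z ((fpoly n).map (Int.castRingHom ℂ)) = z^n - ∑ i ∈ range n, z^i := by
  simp [fpoly, Polynomial.map_sub, Polynomial.map_pow, Polynomial.map_sum,
    Polynomial.eval_finset_sum]

lemma msprod (s : Multiset ℝ) (h0 : ∀ x ∈ s, 0 ≤ x) (h1 : ∀ x ∈ s, x < 1) (hne : s ≠ 0) :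
    s.prod < 1 := by
  induction s using Multiset.induction with
  | empty => simp at hne
  | cons a t ih =>
    rw [Multiset.prod_cons]
    rcases eq_or_ne t 0 with rfl | ht
    · simpa using h1 a (by simp)
    · have hta : t.prod < 1 := ih (fun x hx => h0 x (by simp [hx])) (fun x hx => h1 x (by simp [hx])) ht
      have h0t : 0 ≤ t.prod := Multiset.prod_nonneg (fun x hx => h0 x (by simp [hx]))
      have ha0 : 0 ≤ a := h0 a (by simp)
      have ha1 : a < 1 := h1 a (by simp)
      nlinarith

lemma aux_ineq : ∀ n : ℕ, 2 ≤ n → (n+1)^(n+1) < 2^(n+1) * n^n := by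
  intro n hn
  induction n with
  | zero => omega
  | succ m ih =>
    rcases Nat.lt_or_ge m 2 with hm | hm
    · interval_cases m
      · omega
      · norm_num
    · have IH := ih hm
      have h1 : (m+2)^(m+2) * (m+1)^(m+1) < (m+2)^(m+2) * (2^(m+1) * m^m) := by
        have : 0 < (m+2)^(m+2) := by positivity
        exact (Nat.mul_lt_mul_left this).mpr IH
      have h2 : (m+2)^(m+2) * (2^(m+1) * m^m) ≤ 2^(m+2) * (m+1)^(m+1) * (m+1)^(m+1) := by
        have ha : (m+2)^m * m^m ≤ (m+1)^(2*m) := by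
          rw [← Nat.mul_pow, pow_mul]
          apply Nat.pow_le_pow_left
          nlinarith
        have hb : (m+2)^2 ≤ 2 * (m+1)^2 := by nlinarith
        calc (m+2)^(m+2) * (2^(m+1) * m^m)
            = 2^(m+1) * ((m+2)^2 * ((m+2)^m * m^m)) := by ring
        _ ≤ 2^(m+1) * ((2*(m+1)^2) * (m+1)^(2*m)) := by
            apply Nat.mul_le_mul_left
            exact Nat.mul_le_mul hb ha
        _ = 2^(m+2) * (m+1)^(m+1) * (m+1)^(m+1) := by ring
      have h3 : (m+2)^(m+2) * (m+1)^(m+1) < 2^(m+2) * (m+1)^(m+1) * (m+1)^(m+1) :=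
        lt_of_lt_of_le h1 h2
      exact Nat.lt_of_mul_lt_mul_right h3

lemma no_crit (n : ℕ) (hn : 2 ≤ n) (β : ℝ) (hβ1 : 1 < β)
    (hroot : β^n = ∑ i ∈ range n, β^i)
    (hder : ((n:ℝ)+1)*β^n - 2*n*β^(n-1) = 0) : False := by
  have hβ0 : (0:ℝ) < β := lt_trans one_pos hβ1
  have hrel : β^(n+1) = 2*β^n - 1 := by
    have hg := geom_sum_mul β n
    calc β^(n+1) = β^n * (β - 1) + β^n := by ring
    _ = (∑ i ∈ range n, β^i) * (β-1) + β^n := by rw [← hroot]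
    _ = (β^n - 1) + β^n := by rw [hg]
    _ = 2*β^n - 1 := by ring
  have hb : ((n:ℝ)+1) * β = 2*n := by
    have h1 : β^n = β^(n-1) * β := by rw [← pow_succ]; congr 1; omega
    rw [h1] at hder
    have h2 : β^(n-1) * (((n:ℝ)+1)*β - 2*n) = 0 := by linarith [hder]
    rcases mul_eq_zero.mp h2 with h | h
    · exact absurd h (ne_of_gt (pow_pos hβ0 _))
    · linarith
  have hkey : ((n:ℝ)+1)^(n+1) = 2^(n+1) * (n:ℝ)^n := by
    have hc : (((n:ℝ)+1))^(n+1) * (β^(n+1) - 2*β^n + 1) = 0 := by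
      rw [hrel]; ring
    have hexp : (((n:ℝ)+1)*β)^(n+1) - 2*(((n:ℝ)+1)*β)^n * ((n:ℝ)+1) + ((n:ℝ)+1)^(n+1) = 0 := by
      have e : ((n:ℝ)+1)^(n+1) * β^(n+1) - 2*(((n:ℝ)+1)^n * β^n) * ((n:ℝ)+1) + ((n:ℝ)+1)^(n+1) = 0 := by
        have hps : ((n:ℝ)+1)^(n+1) = ((n:ℝ)+1)^n * ((n:ℝ)+1) := by rw [pow_succ]
        linear_combination hc + (β^n - β^(n+1)) * hps
      calc (((n:ℝ)+1)*β)^(n+1) - 2*(((n:ℝ)+1)*β)^n * ((n:ℝ)+1) + ((n:ℝ)+1)^(n+1)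
          = ((n:ℝ)+1)^(n+1) * β^(n+1) - 2*(((n:ℝ)+1)^n * β^n) * ((n:ℝ)+1) + ((n:ℝ)+1)^(n+1) := by
            rw [mul_pow, mul_pow]
      _ = 0 := e
    rw [hb] at hexp
    have h2n : ((2:ℝ)*n)^(n+1) - 2*((2:ℝ)*n)^n*((n:ℝ)+1) + ((n:ℝ)+1)^(n+1) = 0 := hexp
    have hpow : ((2:ℝ)*n)^(n+1) = ((2:ℝ)*n)^n * (2*n) := by rw [pow_succ]
    have : ((n:ℝ)+1)^(n+1) = 2 * ((2:ℝ)*n)^n := by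
      rw [hpow] at h2n; ring_nf at h2n ⊢; linarith
    rw [this, mul_pow]
    ring
  have hnat : ((n:ℕ)+1)^(n+1) = 2^(n+1) * n^n := by
    exact_mod_cast hkey
  have := aux_ineq n hn
  omega

lemma beta_exists (n : ℕ) (hn : 2 ≤ n) :
    ∃ β : ℝ, 1 < β ∧ β < 2 ∧ β^n = ∑ i ∈ range n, β^i := by
  set φ : ℝ → ℝ := fun x => x^n - ∑ i ∈ range n, x^i with hφ
  have hc : Continuous φ := (continuous_pow n).sub (continuous_finset_sum _ fun i _ => continuous_pow i)
  have h1 : φ 1 = 1 - n := by simp [hφ]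
  have h2 : φ 2 = 1 := by
    have : ∑ i ∈ range n, (2:ℝ)^i = 2^n - 1 := by
      have := geom_sum_mul (2:ℝ) n
      nlinarith [this]
    simp [hφ, this]
  have key : (0:ℝ) ∈ Set.Ioo (φ 1) (φ 2) := by
    constructor
    · rw [h1]; have : (2:ℝ) ≤ n := by exact_mod_cast hn
      linarith
    · rw [h2]; norm_num
  obtain ⟨β, hβmem, hβ⟩ := intermediate_value_Ioo (le_of_lt one_lt_two) hc.continuousOn key
  exact ⟨β, hβmem.1, hβmem.2, by simpa [hφ, sub_eq_zero] using hβ⟩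

lemma key_root (n : ℕ) (hn : 2 ≤ n) (β : ℝ) (hβ1 : 1 < β)
    (hβ : β^n = ∑ i ∈ range n, β^i) (z : ℂ) (hz : z^n = ∑ i ∈ range n, z^i) :
    z = (β:ℂ) ∨ ‖z‖ < 1 := by
  set w : ℂ := (β:ℂ) with hw
  have hz1 : z ≠ 1 := by
    rintro rfl
    simp only [one_pow, Finset.sum_const, Finset.card_range, nsmul_eq_mul, mul_one] at hz
    have : (n:ℕ) = 1 := by exact_mod_cast hz.symm
    omega
  have e1 : z^n * z = 2*z^n - 1 := by
    have hg := geom_sum_mul z n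
    calc z^n * z = z^n * (z-1) + z^n := by ring
    _ = (∑ i ∈ range n, z^i) * (z-1) + z^n := by rw [← hz]
    _ = (z^n - 1) + z^n := by rw [hg]
    _ = 2*z^n - 1 := by ring
  have hβ' : w^n = ∑ i ∈ range n, w^i := by
    rw [hw]; exact_mod_cast congrArg (fun x : ℝ => (x:ℂ)) hβ
  have e2 : w^n * w = 2*w^n - 1 := by
    have hg := geom_sum_mul w n
    calc w^n * w = w^n * (w-1) + w^n := by ring
    _ = (∑ i ∈ range n, w^i) * (w-1) + w^n := by rw [← hβ']
    _ = (w^n - 1) + w^n := by rw [hg]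
    _ = 2*w^n - 1 := by ring
  set T : ℂ := ∑ i ∈ range n, z^i * w^(n-1-i) with hT
  have hgeom : T * (z - w) = z^n - w^n := geom_sum₂_mul z w n
  have main : (z - w) * (T - w^n * z^n) = 0 := by
    linear_combination hgeom - w^n * e1 + z^n * e2
  rcases mul_eq_zero.mp main with h | h
  · left; exact sub_eq_zero.mp h
  · right
    have hTz : T = w^n * z^n := sub_eq_zero.mp h
    by_contra habs
    push_neg at habs
    set r : ℝ := ‖z‖ with hr
    have hr1 : 1 ≤ r := habs
    have hβ0 : (0:ℝ) < β := lt_trans one_pos hβ1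
    have habsw : ‖w‖ = β := by rw [hw, Complex.norm_real, Real.norm_of_nonneg hβ0.le]
    have hub : ‖T‖ ≤ r^(n-1) * β^n := by
      calc ‖T‖ ≤ ∑ i ∈ range n, ‖z^i * w^(n-1-i)‖ := by
            rw [hT]; exact norm_sum_le _ _
      _ = ∑ i ∈ range n, r^i * β^(n-1-i) := by
            apply Finset.sum_congr rfl; intro i hi
            rw [norm_mul, norm_pow, norm_pow, habsw, hr]
      _ ≤ ∑ i ∈ range n, r^(n-1) * β^(n-1-i) := by
            apply Finset.sum_le_sum; intro i hi
            have : r^i ≤ r^(n-1) := pow_le_pow_right₀ hr1 (by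
              have := Finset.mem_range.mp hi; omega)
            exact mul_le_mul_of_nonneg_right this (by positivity)
      _ = r^(n-1) * ∑ i ∈ range n, β^(n-1-i) := by rw [← Finset.mul_sum]
      _ = r^(n-1) * β^n := by
            congr 1
            rw [Finset.sum_range_reflect (fun j => β^j) n, ← hβ]
    have hlb : ‖T‖ = β^n * r^n := by
      rw [hTz, norm_mul, norm_pow, norm_pow, habsw, ← hr]
    have hr0 : (0:ℝ) < r := lt_of_lt_of_le one_pos hr1
    have hreq : r = 1 := by
      have hβn : (0:ℝ) < β^n := by positivity
      have hrn1 : (0:ℝ) < r^(n-1) := pow_pos hr0 _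
      have hpow : r^n = r^(n-1) * r := by rw [← pow_succ]; congr 1; omega
      have h1 : β^n * (r^(n-1) * r) ≤ β^n * (r^(n-1) * 1) := by
        rw [← hpow, mul_one]
        calc β^n * r^n = ‖T‖ := hlb.symm
        _ ≤ r^(n-1) * β^n := hub
        _ = β^n * r^(n-1) := by ring
      have h2 : r^(n-1) * r ≤ r^(n-1) * 1 := le_of_mul_le_mul_left h1 hβn
      have := le_of_mul_le_mul_left h2 hrn1
      linarith
    set c : ℂ := (starRingEnd ℂ) (z^n) with hc
    have hzc : z^n * c = 1 := by
      rw [hc, Complex.mul_conj]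
      norm_cast
      rw [Complex.normSq_eq_norm_sq]
      rw [norm_pow, ← hr, hreq, one_pow, one_pow]
    have hsum : ∑ i ∈ range n, (z^i * c) * w^(n-1-i) = w^n := by
      calc ∑ i ∈ range n, (z^i * c) * w^(n-1-i) = (∑ i ∈ range n, z^i * w^(n-1-i)) * c := by
            rw [Finset.sum_mul]; apply Finset.sum_congr rfl; intro i _; ring
      _ = (w^n * z^n) * c := by rw [← hT, hTz]
      _ = w^n * (z^n * c) := by ring
      _ = w^n := by rw [hzc, mul_one]
    have habs1 : ∀ i ∈ range n, ‖z^i * c‖ = 1 := by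
      intro i _
      rw [norm_mul, norm_pow, ← hr, hreq, one_pow, one_mul, hc, Complex.norm_conj,
        norm_pow, ← hr, hreq, one_pow]
    have hre : ∀ i ∈ range n, (z^i * c).re = 1 := by
      have hsumre : ∑ i ∈ range n, β^(n-1-i) * (1 - (z^i * c).re) = 0 := by
        have := congrArg Complex.re hsum
        rw [Complex.re_sum] at this
        have hterm : ∀ i ∈ range n, ((z^i * c) * w^(n-1-i)).re = (z^i*c).re * β^(n-1-i) := by
          intro i _
          have : w^(n-1-i) = ((β^(n-1-i) : ℝ) : ℂ) := by rw [hw]; push_cast; ring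
          rw [this, Complex.mul_re, Complex.ofReal_re, Complex.ofReal_im]; ring
        rw [Finset.sum_congr rfl hterm] at this
        have hwn : (w^n).re = β^n := by
          have : w^n = ((β^n : ℝ) : ℂ) := by rw [hw]; push_cast; ring
          rw [this, Complex.ofReal_re]
        rw [hwn] at this
        have hβsum : β^n = ∑ i ∈ range n, β^(n-1-i) := by
          rw [Finset.sum_range_reflect (fun j => β^j) n, ← hβ]
        calc ∑ i ∈ range n, β^(n-1-i) * (1 - (z^i * c).re)
            = (∑ i ∈ range n, β^(n-1-i)) - ∑ i ∈ range n, (z^i*c).re * β^(n-1-i) := by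
              rw [← Finset.sum_sub_distrib]; apply Finset.sum_congr rfl; intro i _; ring
        _ = β^n - β^n := by rw [← hβsum, this]
        _ = 0 := by ring
      have hnonneg : ∀ i ∈ range n, 0 ≤ β^(n-1-i) * (1 - (z^i * c).re) := by
        intro i hi
        apply mul_nonneg (by positivity)
        have := Complex.re_le_norm (z^i * c)
        rw [habs1 i hi] at this
        linarith
      intro i hi
      have := (Finset.sum_eq_zero_iff_of_nonneg hnonneg).mp hsumre i hi
      have hβpos : (0:ℝ) < β^(n-1-i) := by positivity
      have : 1 - (z^i * c).re = 0 := by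
        rcases mul_eq_zero.mp this with h' | h'
        · exact absurd h' (ne_of_gt hβpos)
        · exact h'
      linarith
    have heq1 : ∀ i ∈ range n, z^i * c = 1 := by
      intro i hi
      have h1 := hre i hi
      have h2 := habs1 i hi
      have h3 : Complex.normSq (z^i*c) = 1 := by
        rw [← Complex.sq_norm, h2, one_pow]
      rw [Complex.normSq_apply, h1] at h3
      have : (z^i*c).im = 0 := by nlinarith
      exact Complex.ext (by rw [h1, Complex.one_re]) (by rw [this, Complex.one_im])
    have ha : z^(n-1) * c = 1 := heq1 (n-1) (Finset.mem_range.mpr (by omega))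
    have hb : z^(n-2) * c = 1 := heq1 (n-2) (Finset.mem_range.mpr (by omega))
    have : z = 1 := by
      have hp : z^(n-1) = z * z^(n-2) := by
        rw [← pow_succ']
        congr 1; omega
      calc z = z * (z^(n-2) * c) := by rw [hb, mul_one]
      _ = z^(n-1) * c := by rw [hp]; ring
      _ = 1 := ha
    exact hz1 this

lemma small_factor (q : ℤ[X]) (hdeg : 1 ≤ q.natDegree)
    (hlc : q.leadingCoeff = 1 ∨ q.leadingCoeff = -1)
    (h0 : q.coeff 0 = 1 ∨ q.coeff 0 = -1)
    (hroots : ∀ z : ℂ, (q.map (Int.castRingHom ℂ)).eval z = 0 → ‖z‖ < 1) : False := by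
  set Q : ℂ[X] := q.map (Int.castRingHom ℂ) with hQ
  have hq0 : q ≠ 0 := by
    intro h; rw [h] at hdeg; simp at hdeg
  have hQ0 : Q ≠ 0 := by
    rw [hQ]
    exact (Polynomial.map_ne_zero_iff (fun a b h => Int.cast_injective h)).mpr hq0
  have hQdeg : Q.natDegree = q.natDegree :=
    Polynomial.natDegree_map_eq_of_injective (fun a b h => Int.cast_injective h) q
  have hcard : Multiset.card Q.roots = Q.natDegree := by
    have h := (IsAlgClosed.splits Q).natDegree_eq_card_roots
    omega
  have hfact := Polynomial.C_leadingCoeff_mul_prod_multiset_X_sub_C hcard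
  have habs0 : ‖Q.coeff 0‖ = 1 := by
    rw [hQ, Polynomial.coeff_map]
    rcases h0 with h | h <;> rw [h] <;> simp
  have habslc : ‖Q.leadingCoeff‖ = 1 := by
    have : Q.leadingCoeff = ((q.leadingCoeff : ℤ) : ℂ) := by
      rw [hQ, Polynomial.leadingCoeff, hQdeg, Polynomial.coeff_map]; rfl
    rw [this]
    rcases hlc with h | h <;> rw [h] <;> simp
  have heval0 : Q.coeff 0 = Q.leadingCoeff * (Q.roots.map (fun z => -z)).prod := by
    rw [Polynomial.coeff_zero_eq_eval_zero]
    conv_lhs => rw [← hfact]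
    rw [Polynomial.eval_mul, Polynomial.eval_C, Polynomial.eval_multiset_prod,
      Multiset.map_map]
    congr 1
    apply congrArg Multiset.prod
    apply Multiset.map_congr rfl
    intro z _
    simp
  have habsprod : (Q.roots.map (fun z => ‖z‖)).prod = 1 := by
    have := congrArg norm heval0
    rw [norm_mul, habs0, habslc, one_mul] at this
    rw [← normHom_apply, map_multiset_prod, Multiset.map_map] at this
    have e : Multiset.map ((normHom : ℂ →*₀ ℝ) ∘ fun z => -z) Q.roots = Multiset.map (fun z => ‖z‖) Q.roots := by
      apply Multiset.map_congr rfl; intro z _; simp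
    rw [e] at this
    exact this.symm
  have hlt : (Q.roots.map (fun z => ‖z‖)).prod < 1 := by
    apply msprod
    · intro x hx
      obtain ⟨z, hz, rfl⟩ := Multiset.mem_map.mp hx
      exact norm_nonneg _
    · intro x hx
      obtain ⟨z, hz, rfl⟩ := Multiset.mem_map.mp hx
      exact hroots z ((Polynomial.mem_roots hQ0).mp hz)
    · intro h
      rw [Multiset.map_eq_zero] at h
      rw [h] at hcard
      simp at hcard
      omega
  rw [habsprod] at hlt
  exact absurd hlt (by norm_num)

lemma both_root_case (n : ℕ) (hn : 2 ≤ n) (β : ℝ) (hβ1 : 1 < β)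
    (hβroot : β^n = ∑ i ∈ range n, β^i)
    (p q : ℤ[X]) (hpq : fpoly n = p * q)
    (hP : eval ((β:ℝ):ℂ) (p.map (Int.castRingHom ℂ)) = 0)
    (hQ : eval ((β:ℝ):ℂ) (q.map (Int.castRingHom ℂ)) = 0) : False := by
  set φ := Int.castRingHom ℂ
  set b : ℂ := ((β:ℝ):ℂ) with hb
  set F : ℂ[X] := (fpoly n).map φ with hF
  have hFpq : F = p.map φ * q.map φ := by rw [hF, hpq, Polynomial.map_mul]
  have hFb : eval b F = 0 := by rw [hFpq, eval_mul, hP, hQ, mul_zero]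
  have hF'b : eval b (derivative F) = 0 := by
    rw [hFpq, derivative_mul, eval_add, eval_mul, eval_mul, hP, hQ]
    ring
  have hGZ : F * (X - 1) = X^(n+1) - 2*X^n + 1 := by
    have := congrArg (Polynomial.map φ) (fpoly_mul_id n)
    rw [Polynomial.map_mul] at this
    simpa [Polynomial.map_sub, Polynomial.map_add, Polynomial.map_pow,
      Polynomial.map_mul, Polynomial.map_ofNat] using this
  have hder : derivative (F * (X - 1)) = derivative ((X:ℂ[X])^(n+1) - 2*X^n + 1) := by
    rw [hGZ]
  have hLHS : eval b (derivative (F * (X - 1))) = 0 := by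
    rw [derivative_mul, eval_add, eval_mul, eval_mul, hFb, hF'b]
    ring
  have hRHS : eval b (derivative ((X:ℂ[X])^(n+1) - 2*X^n + 1)) =
      ((n:ℂ)+1)*b^n - 2*(n:ℂ)*b^(n-1) := by
    have hd : derivative ((X:ℂ[X])^(n+1) - 2*X^n + 1) =
        C ((n:ℂ)+1) * X^n - C 2 * (C (n:ℂ) * X^(n-1)) := by
      rw [show (2:ℂ[X]) = C 2 from rfl, derivative_add, derivative_sub, derivative_one,
        derivative_mul, Polynomial.derivative_X_pow, Polynomial.derivative_X_pow,
        Polynomial.derivative_C]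
      push_cast
      ring
    rw [hd]
    simp
    ring
  have hcx : ((n:ℂ)+1)*b^n - 2*(n:ℂ)*b^(n-1) = 0 := by
    rw [← hRHS, ← hder, hLHS]
  have hrl : ((n:ℝ)+1)*β^n - 2*(n:ℝ)*β^(n-1) = 0 := by
    have h2 : (((((n:ℝ)+1)*β^n - 2*(n:ℝ)*β^(n-1)) : ℝ) : ℂ) = 0 := by
      push_cast
      rw [← hcx, hb]
    exact_mod_cast h2
  exact no_crit n hn β hβ1 hβroot hrl

lemma fpoly_irred (n : ℕ) (hn : 2 ≤ n) : Irreducible (fpoly n) := by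
  have hmon := fpoly_monic n
  obtain ⟨β, hβ1, hβ2, hβroot⟩ := beta_exists n hn
  constructor
  · exact Polynomial.not_isUnit_of_natDegree_pos _ (by rw [fpoly_natDegree]; omega)
  · intro p q hpq
    by_contra hcon
    push_neg at hcon
    obtain ⟨hpu, hqu⟩ := hcon
    have hp0 : p ≠ 0 := by rintro rfl; rw [zero_mul] at hpq; exact hmon.ne_zero hpq
    have hq0 : q ≠ 0 := by rintro rfl; rw [mul_zero] at hpq; exact hmon.ne_zero hpq
    have hlc : p.leadingCoeff * q.leadingCoeff = 1 := by
      rw [← Polynomial.leadingCoeff_mul, ← hpq]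
      exact hmon.leadingCoeff
    have hlcp : p.leadingCoeff = 1 ∨ p.leadingCoeff = -1 := by
      rcases Int.mul_eq_one_iff_eq_one_or_neg_one.mp hlc with ⟨h, _⟩ | ⟨h, _⟩
      · exact Or.inl h
      · exact Or.inr h
    have hlcq : q.leadingCoeff = 1 ∨ q.leadingCoeff = -1 := by
      rcases Int.mul_eq_one_iff_eq_one_or_neg_one.mp hlc with ⟨_, h⟩ | ⟨_, h⟩
      · exact Or.inl h
      · exact Or.inr h
    have hdp : 1 ≤ p.natDegree := by
      rcases Nat.eq_zero_or_pos p.natDegree with h | h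
      · exfalso
        apply hpu
        rw [Polynomial.eq_C_of_natDegree_eq_zero h]
        apply Polynomial.isUnit_C.mpr
        apply Int.isUnit_iff.mpr
        have : p.leadingCoeff = p.coeff 0 := by rw [Polynomial.leadingCoeff, h]
        rw [← this]
        exact hlcp
      · exact h
    have hdq : 1 ≤ q.natDegree := by
      rcases Nat.eq_zero_or_pos q.natDegree with h | h
      · exfalso
        apply hqu
        rw [Polynomial.eq_C_of_natDegree_eq_zero h]
        apply Polynomial.isUnit_C.mpr
        apply Int.isUnit_iff.mpr
        have : q.leadingCoeff = q.coeff 0 := by rw [Polynomial.leadingCoeff, h]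
        rw [← this]
        exact hlcq
      · exact h
    have hc0 : p.coeff 0 * q.coeff 0 = -1 := by
      rw [← Polynomial.mul_coeff_zero, ← hpq]
      exact fpoly_coeff_lt n 0 (by omega)
    have hp0c : p.coeff 0 = 1 ∨ p.coeff 0 = -1 := by
      apply Int.isUnit_iff.mp
      exact IsUnit.of_mul_eq_one (-(q.coeff 0)) (by rw [mul_neg, hc0]; ring)
    have hq0c : q.coeff 0 = 1 ∨ q.coeff 0 = -1 := by
      apply Int.isUnit_iff.mp
      exact IsUnit.of_mul_eq_one (-(p.coeff 0)) (by rw [mul_neg, mul_comm, hc0]; ring)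
    -- complex roots
    set φc := Int.castRingHom ℂ
    set b : ℂ := ((β:ℝ):ℂ) with hbdef
    have hFb : eval b ((fpoly n).map φc) = 0 := by
      rw [fpoly_map_eval, sub_eq_zero]
      rw [hbdef]
      exact_mod_cast congrArg (fun x : ℝ => (x:ℂ)) hβroot
    have hPQb : eval b (p.map φc) * eval b (q.map φc) = 0 := by
      rw [← eval_mul, ← Polynomial.map_mul, ← hpq]
      exact hFb
    have hrootimp : ∀ z : ℂ, eval z ((fpoly n).map φc) = 0 → z = b ∨ ‖z‖ < 1 := by
      intro z hz
      rw [fpoly_map_eval, sub_eq_zero] at hz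
      rcases key_root n hn β hβ1 hβroot z hz with h | h
      · left; rw [hbdef]; exact h
      · right; exact h
    rcases mul_eq_zero.mp hPQb with hPb | hQb
    · by_cases hQb : eval b (q.map φc) = 0
      · exact both_root_case n hn β hβ1 hβroot p q hpq hPb hQb
      · apply small_factor q hdq hlcq hq0c
        intro z hz
        have hFz : eval z ((fpoly n).map φc) = 0 := by
          rw [hpq, Polynomial.map_mul, eval_mul, hz, mul_zero]
        rcases hrootimp z hFz with rfl | h
        · exact absurd hz hQb
        · exact h
    · by_cases hPb : eval b (p.map φc) = 0
      · exact both_root_case n hn β hβ1 hβroot p q hpq hPb hQb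
      · apply small_factor p hdp hlcp hp0c
        intro z hz
        have hFz : eval z ((fpoly n).map φc) = 0 := by
          rw [hpq, Polynomial.map_mul, eval_mul, hz, zero_mul]
        rcases hrootimp z hFz with rfl | h
        · exact absurd hz hPb
        · exact h

lemma fpoly_irred_rat (n : ℕ) (hn : 2 ≤ n) :
    Irreducible ((fpoly n).map (Int.castRingHom ℚ)) := by
  have h := (fpoly_monic n).irreducible_iff_irreducible_map_fraction_map (K := ℚ)
  rw [algebraMap_int_eq] at h
  exact h.mp (fpoly_irred n hn)

/-- For every `n ≥ 1` there is a Littlewood polynomial of degree `n` (all coefficients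
in `{-1, 1}`) that is irreducible over `ℚ`. -/
theorem stmt11 (n : ℕ) (hn : 1 ≤ n) :
    ∃ f : ℤ[X], f.natDegree = n ∧ (∀ i ≤ n, f.coeff i = 1 ∨ f.coeff i = -1) ∧
      Irreducible (f.map (Int.castRingHom ℚ)) := by
  refine ⟨fpoly n, fpoly_natDegree n, ?_, ?_⟩
  · intro i hi
    rcases lt_or_eq_of_le hi with h | h
    · right; exact fpoly_coeff_lt n i h
    · left; rw [h]; exact fpoly_coeff_self n
  · rcases eq_or_lt_of_le hn with h | h
    · -- n = 1
      apply Polynomial.irreducible_of_degree_eq_one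
      have hm : ((fpoly n).map (Int.castRingHom ℚ)).Monic := (fpoly_monic n).map _
      have hd : ((fpoly n).map (Int.castRingHom ℚ)).natDegree = 1 := by
        rw [(fpoly_monic n).natDegree_map, fpoly_natDegree, ← h]
      rw [Polynomial.degree_eq_natDegree hm.ne_zero, hd]
      rfl
    · exact fpoly_irred_rat n h
end

section
/- Let p be an odd prime, r ≥ 1, n = p^r − 1, and suppose 2 generates (Z/p^2 Z)^×. If f is a monic Littlewood polynomial of degree n such that f has no irreducible factor over Q of degree at most p^{r−1} − 1, then f is irreducible over Q. -/
open Polynomial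

lemma zmod_pow2_eq_one_iff (m k : ℕ) : ((2:ZMod m)^k = 1) ↔ (m:ℤ) ∣ 2^k - 1 := by
  have h : (((2:ℤ)^k - 1 : ℤ) : ZMod m) = (2:ZMod m)^k - 1 := by push_cast; ring
  rw [← ZMod.intCast_zmod_eq_zero_iff_dvd, h, sub_eq_zero]

lemma key_order (p r : ℕ) (hp : p.Prime) (hodd : Odd p) (hr : 1 ≤ r)
    (h2 : orderOf (2 : ZMod (p ^ 2)) = Nat.totient (p ^ 2))
    (k : ℕ) (hk : 0 < k) (hdvd : ((p:ℤ))^r ∣ 2^k - 1) :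
    p^(r-1) * (p-1) ∣ k := by
  have hp2 : p ≠ 2 := by rintro rfl; exact (by decide : ¬ Odd 2) hodd
  have hpint : Prime (p : ℤ) := Nat.prime_iff_prime_int.mp hp
  have hpd2 : ¬ (p:ℤ) ∣ 2 := by
    rw [show ((2:ℤ)) = ((2:ℕ):ℤ) by norm_num, Int.natCast_dvd_natCast]
    intro h; exact hp2 ((Nat.prime_dvd_prime_iff_eq hp Nat.prime_two).mp h)
  haveI : Fact p.Prime := ⟨hp⟩
  have hppos : 0 < p := hp.pos
  have hp1 : 1 < p := hp.one_lt
  have htot2 : Nat.totient (p^2) = p * (p - 1) := by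
    rw [Nat.totient_prime_pow hp (by norm_num)]; ring_nf
  -- Fermat: p ∣ 2^(p-1) - 1
  have hferm : (p:ℤ) ∣ 2^(p-1) - 1 := by
    rw [← zmod_pow2_eq_one_iff]
    exact ZMod.pow_card_sub_one_eq_one (by
      intro h
      exact hpd2 (by rwa [show ((2:ZMod p)) = ((2:ℤ):ZMod p) by push_cast; ring,
        ZMod.intCast_zmod_eq_zero_iff_dvd] at h))
  -- p^2 ∤ 2^(p-1) - 1
  have hnsq : ¬ ((p:ℤ))^2 ∣ 2^(p-1) - 1 := by
    intro h
    have h1 : (2 : ZMod (p^2))^(p-1) = 1 := by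
      rw [zmod_pow2_eq_one_iff]; push_cast at h ⊢; exact h
    have := orderOf_dvd_of_pow_eq_one h1
    rw [h2, htot2] at this
    have hle := Nat.le_of_dvd (by omega) this
    have h3 : 2 * (p - 1) ≤ p * (p - 1) := Nat.mul_le_mul_right _ hp1
    omega
  have hmul1 : emultiplicity ((p:ℤ)) (2^(p-1) - 1) = 1 := by
    refine emultiplicity_eq_of_dvd_of_not_dvd (by simpa using hferm) (by simpa using hnsq)
  -- orderOf (2 : ZMod p) = p - 1
  have hndvd : ∀ t : ℕ, ¬ (p:ℤ) ∣ 2^t := fun t h => hpd2 (hpint.dvd_of_dvd_pow h)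
  have hordp : orderOf (2 : ZMod p) = p - 1 := by
    set t := orderOf (2 : ZMod p) with ht
    have htd : t ∣ p - 1 := orderOf_dvd_of_pow_eq_one (by
      rw [zmod_pow2_eq_one_iff]; simpa using hferm)
    have htone : (p:ℤ) ∣ 2^t - 1 := by
      rw [← zmod_pow2_eq_one_iff]; exact pow_orderOf_eq_one _
    -- LTE: p^2 ∣ 2^(t*p) - 1
    have hlte := Int.emultiplicity_pow_sub_pow hp hodd (x := 2^t) (y := 1) (by simpa using htone)
      (hndvd t) p
    rw [one_pow, ← pow_mul] at hlte
    have h1le : (1:ℕ∞) ≤ emultiplicity ((p:ℤ)) (2^t - 1) :=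
      le_emultiplicity_of_pow_dvd (by simpa using htone)
    have h2le : (1:ℕ∞) ≤ emultiplicity p p :=
      le_emultiplicity_of_pow_dvd (by simp)
    have : (2:ℕ∞) ≤ emultiplicity ((p:ℤ)) (2^(t*p) - 1) := by
      rw [hlte]; exact le_trans (by norm_num) (add_le_add h1le h2le)
    have hsq : ((p:ℤ))^2 ∣ 2^(t*p) - 1 := pow_dvd_of_le_emultiplicity this
    have : (2 : ZMod (p^2))^(t*p) = 1 := by
      rw [zmod_pow2_eq_one_iff]; push_cast; exact hsq
    have hod := orderOf_dvd_of_pow_eq_one this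
    rw [h2, htot2] at hod
    have : (p - 1) ∣ t := by
      rw [mul_comm t p] at hod
      exact (Nat.mul_dvd_mul_iff_left hppos).mp hod
    exact Nat.dvd_antisymm htd this
  -- (p-1) ∣ k
  have hpk : (p - 1) ∣ k := by
    rw [← hordp]
    exact orderOf_dvd_of_pow_eq_one (by
      rw [zmod_pow2_eq_one_iff]
      exact dvd_trans (dvd_pow_self _ (by omega)) hdvd)
  obtain ⟨s, hs⟩ := hpk
  have hsne : s ≠ 0 := by rintro rfl; omega
  -- LTE at exponent s
  have hlte := Int.emultiplicity_pow_sub_pow hp hodd (x := 2^(p-1)) (y := 1) (by simpa using hferm)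
    (hndvd _) s
  rw [one_pow, ← pow_mul, ← hs] at hlte
  have hfin : FiniteMultiplicity p s := Nat.finiteMultiplicity_iff.mpr ⟨hp.ne_one, Nat.pos_of_ne_zero hsne⟩
  have hms := hfin.emultiplicity_eq_multiplicity
  have hkne : (2:ℤ)^k - 1 ≠ 0 := by
    have : (2:ℤ)^k ≥ 2^1 := pow_le_pow_right₀ (by norm_num) hk
    omega
  have hrle : (r:ℕ∞) ≤ emultiplicity ((p:ℤ)) (2^k - 1) :=
    le_emultiplicity_of_pow_dvd hdvd
  rw [hlte, hmul1, hms] at hrle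
  have : r ≤ 1 + multiplicity p s := by
    have := hrle
    rw [show ((1:ℕ∞) + (multiplicity p s : ℕ∞)) = ((1 + multiplicity p s : ℕ) : ℕ∞) by push_cast; rfl] at this
    exact_mod_cast this
  have hdvd' : p^(r-1) ∣ s :=
    dvd_trans (pow_dvd_pow p (by omega)) (pow_multiplicity_dvd p s)
  rw [hs, mul_comm (p-1) s]
  exact mul_dvd_mul hdvd' dvd_rfl


lemma aux_order (p r : ℕ) (hp : p.Prime) (hodd : Odd p) (hr : 1 ≤ r)
    (h2 : orderOf (2 : ZMod (p ^ 2)) = Nat.totient (p ^ 2)) :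
    orderOf (2 : ZMod (p ^ r)) = Nat.totient (p ^ r) := by
  have hp2 : p ≠ 2 := by rintro rfl; exact (by decide : ¬ Odd 2) hodd
  have hcop : Nat.Coprime 2 (p^r) := by
    have : Nat.Coprime p 2 := (Nat.coprime_primes hp Nat.prime_two).mpr hp2
    exact ((this.pow_left r)).symm
  have hu : IsUnit (2 : ZMod (p^r)) := by
    have := (ZMod.isUnit_iff_coprime 2 (p^r)).mpr hcop
    simpa using this
  obtain ⟨u, hu⟩ := hu
  have htd : orderOf (2 : ZMod (p^r)) ∣ Nat.totient (p^r) := by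
    apply orderOf_dvd_of_pow_eq_one
    rw [← hu, ← Units.val_pow_eq_pow_val, ZMod.pow_totient u, Units.val_one]
  haveI : NeZero (p^r) := ⟨pow_ne_zero r hp.ne_zero⟩
  set k := orderOf (2 : ZMod (p^r)) with hkdef
  have hk : 0 < k := by
    rw [hkdef, ← hu, orderOf_units]
    exact orderOf_pos u
  have hdvd : ((p:ℤ))^r ∣ 2^k - 1 := by
    have := (zmod_pow2_eq_one_iff (p^r) k).mp (pow_orderOf_eq_one _)
    push_cast at this; exact this
  have := key_order p r hp hodd hr h2 k hk hdvd
  rw [← Nat.totient_prime_pow hp hr] at this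
  exact Nat.dvd_antisymm htd this

lemma cyclo_irred (m : ℕ) (hm : 1 < m) (hmodd : Odd m)
    (hord : orderOf (2 : ZMod m) = Nat.totient m) :
    Irreducible (cyclotomic m (ZMod 2)) := by
  have hm0 : 0 < m := by omega
  have hΦmonic : (cyclotomic m (ZMod 2)).Monic := cyclotomic.monic m _
  have hΦdeg : (cyclotomic m (ZMod 2)).natDegree = Nat.totient m := natDegree_cyclotomic m _
  have hΦne : cyclotomic m (ZMod 2) ≠ 0 := cyclotomic_ne_zero m _
  have htotpos : 0 < Nat.totient m := Nat.totient_pos.mpr hm0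
  -- main step: any monic irreducible divisor equals cyclotomic m
  have main : ∀ q : (ZMod 2)[X], q.Monic → Irreducible q → q ∣ cyclotomic m (ZMod 2) →
      q = cyclotomic m (ZMod 2) := by
    intro q hqm hqirr hqd
    haveI : Fact (Irreducible q) := ⟨hqirr⟩
    set K := AdjoinRoot q
    have hqne : q ≠ 0 := hqm.ne_zero
    let pb := AdjoinRoot.powerBasis hqne
    haveI : Module.Finite (ZMod 2) K := pb.finite
    haveI : Finite K := Module.finite_of_finite (ZMod 2)
    haveI : Fintype K := Fintype.ofFinite K
    have hcard : Fintype.card K = 2 ^ q.natDegree := by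
      rw [Module.card_fintype pb.basis]
      simp [pb, AdjoinRoot.powerBasis_dim, ZMod.card]
    -- the root
    set x : K := AdjoinRoot.root q
    have hxroot : (Polynomial.map (algebraMap (ZMod 2) K) q).IsRoot x := by
      rw [IsRoot.def, eval_map, ← aeval_def, AdjoinRoot.aeval_eq, AdjoinRoot.mk_self]
    have hΦroot : (cyclotomic m K).IsRoot x := by
      obtain ⟨c, hc⟩ := hqd
      have h0 : eval x (Polynomial.map (algebraMap (ZMod 2) K) q) = 0 := hxroot
      rw [← map_cyclotomic m (algebraMap (ZMod 2) K), hc, Polynomial.map_mul, IsRoot.def,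
        eval_mul, h0, zero_mul]
    haveI : NeZero (m : K) := by
      have h1 : ((m : ZMod 2)) = 1 := by
        rw [← ZMod.natCast_mod m 2, Nat.odd_iff.mp hmodd, Nat.cast_one]
      refine ⟨?_⟩
      rw [← map_natCast (algebraMap (ZMod 2) K) m, h1, map_one]
      exact one_ne_zero
    have hprim : IsPrimitiveRoot x m := isRoot_cyclotomic_iff.mp hΦroot
    have hxord : orderOf x = m := hprim.eq_orderOf.symm
    obtain ⟨v, hv⟩ := hprim.isUnit hm0.ne'
    have hvord : orderOf v = m := by rw [← hxord, ← hv, orderOf_units]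
    have hdvd : m ∣ Fintype.card Kˣ := hvord ▸ orderOf_dvd_card
    rw [Fintype.card_units, hcard] at hdvd
    have h2d : (2 : ZMod m)^q.natDegree = 1 := by
      rw [zmod_pow2_eq_one_iff]
      have h1 : 1 ≤ 2^q.natDegree := Nat.one_le_two_pow
      have : (2:ℤ)^q.natDegree - 1 = ((2^q.natDegree - 1 : ℕ) : ℤ) := by
        push_cast [h1]; ring
      rw [this]
      exact_mod_cast Int.natCast_dvd_natCast.mpr hdvd
    have hdd : Nat.totient m ∣ q.natDegree := hord ▸ orderOf_dvd_of_pow_eq_one h2d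
    have hdle : q.natDegree ≤ Nat.totient m := hΦdeg ▸ natDegree_le_of_dvd hqd hΦne
    have hd0 : 0 < q.natDegree := Nat.pos_of_ne_zero (fun h => hqirr.not_isUnit
      (by rw [hqm.natDegree_eq_zero.mp h]; exact isUnit_one))
    have hdeq : q.natDegree = Nat.totient m := le_antisymm hdle (Nat.le_of_dvd hd0 hdd)
    obtain ⟨c, hc⟩ := hqd
    have hcne : c ≠ 0 := by rintro rfl; rw [mul_zero] at hc; exact hΦne hc
    have hcm : c.Monic := hqm.of_mul_monic_left (hc ▸ hΦmonic)
    have hc0 : c.natDegree = 0 := by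
      have := hΦdeg
      rw [hc, natDegree_mul hqne hcne] at this
      omega
    rw [hc, hcm.natDegree_eq_zero.mp hc0, mul_one]
  have hnu : ¬ IsUnit (cyclotomic m (ZMod 2)) := by
    intro h
    have := natDegree_eq_zero_of_isUnit h
    omega
  obtain ⟨q, hqirr, hqd⟩ := WfDvdMonoid.exists_irreducible_factor hnu hΦne
  have heq := main (normalize q) (monic_normalize hqirr.ne_zero)
    ((normalize_associated q).symm.irreducible hqirr)
    (((normalize_associated q).dvd).trans hqd)
  exact heq ▸ ((normalize_associated q).symm.irreducible hqirr)


/-- Let `p` be an odd prime with 2 generating `(ZMod (p^2))ˣ`, `r ≥ 1`, `n = p^r - 1`.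
If a monic Littlewood polynomial `f` of degree `n` has no irreducible factor over `ℚ`
of degree at most `p^(r-1) - 1`, then `f` is irreducible over `ℚ`. -/
theorem stmt15 (p r n : ℕ) (hp : p.Prime) (hodd : Odd p) (hr : 1 ≤ r)
    (hn : n = p ^ r - 1)
    (h2 : orderOf (2 : ZMod (p ^ 2)) = Nat.totient (p ^ 2))
    (f : ℤ[X]) (hf : f.Monic) (hdeg : f.natDegree = n)
    (hcoeff : ∀ i ≤ n, f.coeff i = 1 ∨ f.coeff i = -1)
    (hnofactor : ∀ q : ℚ[X], Irreducible q → q ∣ f.map (Int.castRingHom ℚ) →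
      ¬ q.natDegree ≤ p ^ (r - 1) - 1) :
    Irreducible (f.map (Int.castRingHom ℚ)) := by
  have hp1 : 1 < p := hp.one_lt
  have hprpos : 0 < p ^ r := pow_pos hp.pos r
  have hpr1 : 1 < p ^ r := Nat.one_lt_pow (by omega) hp1
  have hn1 : n + 1 = p ^ r := by omega
  have hALT : p ^ r = p ^ (r-1) * p := by
    conv_lhs => rw [show r = (r-1)+1 by omega]
    rw [pow_succ]
  have htot : Nat.totient (p^r) = p^(r-1) * (p-1) := Nat.totient_prime_pow hp hr
  -- reduce to irreducibility over ℤ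
  rw [show (Int.castRingHom ℚ) = algebraMap ℤ ℚ from rfl]
  rw [← (Polynomial.Monic.irreducible_iff_irreducible_map_fraction_map hf)]
  by_contra hirr
  have hfnu : ¬ IsUnit f := by
    intro h
    have := natDegree_eq_zero_of_isUnit h
    rw [hdeg] at this
    omega
  rw [irreducible_iff] at hirr
  push_neg at hirr
  obtain ⟨a, b, hab, hau, hbu⟩ := hirr hfnu
  -- normalize signs to make both monic
  have hlc : a.leadingCoeff * b.leadingCoeff = 1 := by
    rw [← leadingCoeff_mul, ← hab]; exact hf
  obtain ⟨g, h, hgh, hgm, hhm, hgu, hhu⟩ :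
      ∃ g h : ℤ[X], f = g * h ∧ g.Monic ∧ h.Monic ∧ ¬ IsUnit g ∧ ¬ IsUnit h := by
    rcases Int.mul_eq_one_iff_eq_one_or_neg_one.mp hlc with h1 | h1
    · exact ⟨a, b, hab, h1.1, h1.2, hau, hbu⟩
    · exact ⟨-a, -b, by rw [hab]; ring, by rw [Monic, leadingCoeff_neg, h1.1]; norm_num,
        by rw [Monic, leadingCoeff_neg, h1.2]; norm_num,
        by simpa using hau, by simpa using hbu⟩
  clear hab hau hbu hlc a b
  have hgne : g ≠ 0 := hgm.ne_zero
  have hhne : h ≠ 0 := hhm.ne_zero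
  have hgd1 : 1 ≤ g.natDegree := Nat.pos_of_ne_zero (fun h0 => hgu (by
    rw [hgm.natDegree_eq_zero.mp h0]; exact isUnit_one))
  have hhd1 : 1 ≤ h.natDegree := Nat.pos_of_ne_zero (fun h0 => hhu (by
    rw [hhm.natDegree_eq_zero.mp h0]; exact isUnit_one))
  have hsum : g.natDegree + h.natDegree = n := by
    rw [← hdeg, hgh, natDegree_mul hgne hhne]
  -- reduction mod 2
  set φ : ℤ →+* ZMod 2 := Int.castRingHom (ZMod 2) with hφ
  have hfb : f.map φ = ∑ i ∈ Finset.range (n+1), (X : (ZMod 2)[X])^i := by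
    ext j
    rw [coeff_map, finset_sum_coeff]
    simp only [coeff_X_pow]
    rw [Finset.sum_ite_eq (Finset.range (n+1)) j (fun _ => (1 : ZMod 2))]
    by_cases hj : j ≤ n
    · rcases hcoeff j hj with h1 | h1 <;>
        simp [h1, Finset.mem_range, Nat.lt_succ_iff, hj]
    · rw [coeff_eq_zero_of_natDegree_lt (by omega : f.natDegree < j)]
      simp [Finset.mem_range, Nat.lt_succ_iff, hj]
  have hgeom : (f.map φ) * (X - 1) = X^(p^r) - 1 := by
    rw [hfb, geom_sum_mul, hn1]
  -- cyclotomic factor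
  set Φ : (ZMod 2)[X] := cyclotomic (p^r) (ZMod 2) with hΦdef
  have hΦirr : Irreducible Φ := cyclo_irred (p^r) hpr1 (hodd.pow)
    (aux_order p r hp hodd hr h2)
  have hΦprime : Prime Φ := hΦirr.prime
  have hΦdeg : Φ.natDegree = p^(r-1) * (p-1) := by
    rw [hΦdef, natDegree_cyclotomic, htot]
  have hΦdvd : Φ ∣ f.map φ := by
    have h1 : Φ ∣ (f.map φ) * (X - 1) := by
      rw [hgeom]; exact cyclotomic.dvd_X_pow_sub_one (p^r) (ZMod 2)
    rcases hΦprime.dvd_or_dvd h1 with h2' | h2'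
    · exact h2'
    · exfalso
      have hC : ((X : (ZMod 2)[X]) - 1) = X - C 1 := by rw [map_one]
      have hle := natDegree_le_of_dvd h2' (X_sub_C_ne_zero 1)
      rw [hΦdeg, hC, natDegree_X_sub_C] at hle
      have hp3 : 3 ≤ p := by rcases hodd with ⟨t, ht⟩; omega
      have h1' : 1 ≤ p^(r-1) := Nat.one_le_pow _ _ hp.pos
      have hmul : 1 * 2 ≤ p^(r-1) * (p-1) := Nat.mul_le_mul h1' (by omega)
      omega
  -- key degree argument, symmetric in g and h
  have main : ∀ g' h' : ℤ[X], f = g' * h' → g'.Monic → h'.Monic → ¬ IsUnit g' →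
      Φ ∣ h'.map φ → False := by
    intro g' h' hf' hg'm hh'm hg'u hΦd
    have hg'ne : g' ≠ 0 := hg'm.ne_zero
    have hh'ne : h' ≠ 0 := hh'm.ne_zero
    have hsum' : g'.natDegree + h'.natDegree = n := by
      rw [← hdeg, hf', natDegree_mul hg'ne hh'ne]
    have hh'b : (h'.map φ) ≠ 0 := (hh'm.map φ).ne_zero
    have hdegh' : Φ.natDegree ≤ h'.natDegree := by
      have := natDegree_le_of_dvd hΦd hh'b
      rwa [hh'm.natDegree_map] at this
    have hg'small : g'.natDegree ≤ p^(r-1) - 1 := by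
      rw [hΦdeg] at hdegh'
      have e1 : p^(r-1) * (p-1) = p^(r-1)*p - p^(r-1) := by
        rw [Nat.mul_sub_one]
      have h1' : 1 ≤ p^(r-1) := Nat.one_le_pow _ _ hp.pos
      have e2 : p^(r-1) ≤ p^(r-1)*p := Nat.le_mul_of_pos_right _ hp.pos
      omega
    -- irreducible factor of g' over ℚ
    have hg'd1 : 1 ≤ g'.natDegree := Nat.pos_of_ne_zero (fun h0 => hg'u (by
      rw [hg'm.natDegree_eq_zero.mp h0]; exact isUnit_one))
    set gQ : ℚ[X] := g'.map (Int.castRingHom ℚ) with hgQ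
    have hgQm : gQ.Monic := hg'm.map _
    have hgQd : gQ.natDegree = g'.natDegree := hg'm.natDegree_map _
    have hgQnu : ¬ IsUnit gQ := by
      intro hU
      have := natDegree_eq_zero_of_isUnit hU
      omega
    obtain ⟨q, hqirr, hqd⟩ := WfDvdMonoid.exists_irreducible_factor hgQnu hgQm.ne_zero
    refine hnofactor q hqirr ?_ ?_
    · rw [hf', Polynomial.map_mul]
      exact hqd.trans (Dvd.intro _ rfl)
    · have := natDegree_le_of_dvd hqd hgQm.ne_zero
      omega
  -- apply in both cases
  have hmap : f.map φ = (g.map φ) * (h.map φ) := by rw [hgh, Polynomial.map_mul]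
  rw [hmap] at hΦdvd
  rcases hΦprime.dvd_or_dvd hΦdvd with hc | hc
  · exact main h g (by rw [hgh, mul_comm]) hhm hgm hhu hc
  · exact main g h hgh hgm hhm hgu hc
end

section
/- Let n+1 = 2^m and let 0 < θ < 1/2. Let f be a monic Littlewood polynomial of degree n, set g(X) = f(X+1) with coefficients g_0, …, g_{n−1} (all even). If there exists i < θn with g_i ≡ 2 (mod 4), and f has no irreducible factor over Q of degree less than θn, then f is irreducible over Q. -/
open Polynomial

private lemma zmod2_dvd_pow_X (p : (ZMod 2)[X]) (n : ℕ) (h : p ∣ X ^ n) :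
    p = X ^ p.natDegree := by
  obtain ⟨i, hin, hassoc⟩ := (dvd_prime_pow Polynomial.prime_X n).mp h
  obtain ⟨u, hu⟩ := hassoc
  have hone : (u : (ZMod 2)[X]) = 1 := by
    obtain ⟨r, hr, hCr⟩ := Polynomial.isUnit_iff.mp u.isUnit
    have hr1 : r = 1 := by
      have h0 : r ≠ 0 := hr.ne_zero
      have hall : ∀ s : ZMod 2, s ≠ 0 → s = 1 := by decide
      exact hall r h0
    rw [← hCr, hr1, Polynomial.C_1]
  rw [hone, mul_one] at hu
  subst hu
  rw [Polynomial.natDegree_X_pow]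

private lemma map_g_eq_X_pow (n m : ℕ) (hm : n + 1 = 2 ^ m) (f : ℤ[X])
    (hdeg : f.natDegree = n) (hcoeff : ∀ i ≤ n, f.coeff i = 1 ∨ f.coeff i = -1) :
    (f.comp (X + 1)).map (Int.castRingHom (ZMod 2)) = X ^ n := by
  have hrf : f.map (Int.castRingHom (ZMod 2)) = ∑ k ∈ Finset.range (n + 1), X ^ k := by
    ext i
    rw [Polynomial.coeff_map]
    rw [Polynomial.finset_sum_coeff]
    simp only [Polynomial.coeff_X_pow]
    by_cases hi : i ≤ n
    · rw [Finset.sum_eq_single i (fun b _ hb => if_neg (fun h => hb h.symm))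
        (fun h => absurd (Finset.mem_range.mpr (by omega)) h)]
      rw [if_pos rfl]
      rcases hcoeff i hi with h | h <;> rw [h] <;> decide
    · push_neg at hi
      rw [Polynomial.coeff_eq_zero_of_natDegree_lt (by omega)]
      rw [Finset.sum_eq_zero (fun b hb => if_neg (by
        have := Finset.mem_range.mp hb; omega))]
      simp
  -- (∑ X^k) * (X - 1) = X^(n+1) - 1
  have h1 : (f.map (Int.castRingHom (ZMod 2))) * (X - 1) = X ^ (n + 1) - 1 := by
    rw [hrf]; exact geom_sum_mul X (n + 1)
  -- compose with X + 1
  have h2 : ((f.map (Int.castRingHom (ZMod 2))).comp (X + 1)) * X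
      = (X + 1) ^ (n + 1) - 1 := by
    have := congrArg (fun p => p.comp (X + 1 : (ZMod 2)[X])) h1
    simp only [Polynomial.mul_comp, Polynomial.sub_comp, Polynomial.pow_comp,
      Polynomial.X_comp, Polynomial.one_comp] at this
    convert this using 2
    ring
  have h3 : ((X : (ZMod 2)[X]) + 1) ^ (n + 1) = X ^ (n + 1) + 1 := by
    rw [hm]
    rw [add_pow_char_pow]
    simp
  rw [h3] at h2
  simp only [add_sub_cancel_right] at h2
  have h4 : (f.comp (X + 1)).map (Int.castRingHom (ZMod 2))
      = (f.map (Int.castRingHom (ZMod 2))).comp (X + 1) := by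
    rw [Polynomial.map_comp]
    simp
  rw [h4]
  apply mul_right_cancel₀ (Polynomial.X_ne_zero : (X : (ZMod 2)[X]) ≠ 0)
  rw [h2, ← pow_succ]

/-- Let `n + 1 = 2 ^ m` and `0 < θ < 1/2`. Let `f` be a monic Littlewood polynomial of
degree `n` and `g(X) = f(X+1)`. If some index `i < θn` has `g_i ≡ 2 (mod 4)`, and `f`
has no irreducible factor over `ℚ` of degree less than `θn`, then `f` is irreducible
over `ℚ`. -/
theorem stmt16 (n m : ℕ) (hm : n + 1 = 2 ^ m) (θ : ℝ) (hθ0 : 0 < θ) (hθ : θ < 1/2)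
    (f : ℤ[X]) (hf : f.Monic) (hdeg : f.natDegree = n)
    (hcoeff : ∀ i ≤ n, f.coeff i = 1 ∨ f.coeff i = -1)
    (g : ℤ[X]) (hg : g = f.comp (X + 1))
    (hi : ∃ i : ℕ, (i : ℝ) < θ * n ∧ g.coeff i % 4 = 2)
    (hnofactor : ∀ q : ℚ[X], Irreducible q → q ∣ f.map (Int.castRingHom ℚ) →
      ¬ ((q.natDegree : ℝ) < θ * n)) :
    Irreducible (f.map (Int.castRingHom ℚ)) := by
  obtain ⟨i0, hi0θ, hi0mod⟩ := hi
  have hθn : (0:ℝ) < θ * n := lt_of_le_of_lt (Nat.cast_nonneg i0) hi0θ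
  have hn0 : 0 < n := by
    rcases Nat.eq_zero_or_pos n with h | h
    · exfalso; rw [h] at hθn; simp at hθn
    · exact h
  by_contra hF
  have hfirr : ¬ Irreducible f := fun h =>
    hF ((Polynomial.IsPrimitive.Int.irreducible_iff_irreducible_map_cast hf.isPrimitive).mp h)
  have hfu : ¬ IsUnit f := by
    intro h
    have := Polynomial.natDegree_eq_zero_of_isUnit h
    omega
  rw [irreducible_iff] at hfirr
  push_neg at hfirr
  obtain ⟨P, Q, hPQ, hPu, hQu⟩ := hfirr hfu
  have hf0 : f ≠ 0 := hf.ne_zero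
  have hPne : P ≠ 0 := fun h => hf0 (by rw [hPQ, h, zero_mul])
  have hQne : Q ≠ 0 := fun h => hf0 (by rw [hPQ, h, mul_zero])
  -- primitivity of the factors
  have hcont : P.content * Q.content = 1 := by
    rw [← Polynomial.content_mul, ← hPQ,
      Polynomial.isPrimitive_iff_content_eq_one.mp hf.isPrimitive]
  have hPprim : P.IsPrimitive := by
    rw [Polynomial.isPrimitive_iff_content_eq_one, ← Polynomial.normalize_content]
    exact normalize_eq_one.mpr (IsUnit.of_mul_eq_one _ hcont)
  have hQprim : Q.IsPrimitive := by
    rw [Polynomial.isPrimitive_iff_content_eq_one, ← Polynomial.normalize_content]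
    exact normalize_eq_one.mpr (IsUnit.of_mul_eq_one _ (by rw [mul_comm]; exact hcont))
  -- the factors have positive degree
  have hdeg_pos : ∀ R : ℤ[X], R.IsPrimitive → ¬IsUnit R → 1 ≤ R.natDegree := by
    intro R hprim hRu
    by_contra h
    push_neg at h
    have h0 : R.natDegree = 0 := by omega
    have hRC := Polynomial.eq_C_of_natDegree_eq_zero h0
    exact hRu (hRC ▸ Polynomial.isUnit_C.mpr (hprim (R.coeff 0) (hRC ▸ dvd_refl _)))
  have hP1 : 1 ≤ P.natDegree := hdeg_pos P hPprim hPu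
  have hQ1 : 1 ≤ Q.natDegree := hdeg_pos Q hQprim hQu
  have hab : P.natDegree + Q.natDegree = n := by
    rw [← hdeg, hPQ, Polynomial.natDegree_mul hPne hQne]
  -- lower bounds on degrees via hnofactor
  have key : ∀ R : ℤ[X], R ≠ 0 → 1 ≤ R.natDegree →
      (R.map (Int.castRingHom ℚ)) ∣ f.map (Int.castRingHom ℚ) → θ * n ≤ (R.natDegree : ℝ) := by
    intro R hR0 hR1 hdvd
    have hinj : Function.Injective (Int.castRingHom ℚ) := Int.cast_injective
    have hRm0 : R.map (Int.castRingHom ℚ) ≠ 0 := by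
      rwa [Ne, Polynomial.map_eq_zero_iff hinj]
    have hdegm : (R.map (Int.castRingHom ℚ)).natDegree = R.natDegree :=
      Polynomial.natDegree_map_eq_of_injective hinj R
    have hRmu : ¬IsUnit (R.map (Int.castRingHom ℚ)) := by
      intro h
      have := Polynomial.natDegree_eq_zero_of_isUnit h
      omega
    obtain ⟨q, hq, hqdvd⟩ := WfDvdMonoid.exists_irreducible_factor hRmu hRm0
    have h1 := hnofactor q hq (hqdvd.trans hdvd)
    push_neg at h1
    have h2 : q.natDegree ≤ R.natDegree := by
      have := Polynomial.natDegree_le_of_dvd hqdvd hRm0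
      omega
    calc θ * n ≤ (q.natDegree : ℝ) := h1
      _ ≤ (R.natDegree : ℝ) := Nat.cast_le.mpr h2
  have hPdvd : (P.map (Int.castRingHom ℚ)) ∣ f.map (Int.castRingHom ℚ) :=
    ⟨Q.map (Int.castRingHom ℚ), by rw [hPQ, Polynomial.map_mul]⟩
  have hQdvd : (Q.map (Int.castRingHom ℚ)) ∣ f.map (Int.castRingHom ℚ) :=
    ⟨P.map (Int.castRingHom ℚ), by rw [hPQ, Polynomial.map_mul, mul_comm]⟩
  have hPa : θ * n ≤ (P.natDegree : ℝ) := key P hPne hP1 hPdvd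
  have hQb : θ * n ≤ (Q.natDegree : ℝ) := key Q hQne hQ1 hQdvd
  have hi0a : i0 < P.natDegree := by
    have : (i0 : ℝ) < (P.natDegree : ℝ) := lt_of_lt_of_le hi0θ hPa
    exact_mod_cast this
  have hi0b : i0 < Q.natDegree := by
    have : (i0 : ℝ) < (Q.natDegree : ℝ) := lt_of_lt_of_le hi0θ hQb
    exact_mod_cast this
  -- mod 2 analysis
  have hX1deg : (X + 1 : ℤ[X]).natDegree = 1 := by compute_degree!
  have hgPQ : g = (P.comp (X + 1)) * (Q.comp (X + 1)) := by
    rw [hg, hPQ, Polynomial.mul_comp]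
  have hgmap : g.map (Int.castRingHom (ZMod 2)) = X ^ n := by
    rw [hg]; exact map_g_eq_X_pow n m hm f hdeg hcoeff
  have hlc : P.leadingCoeff * Q.leadingCoeff = 1 := by
    have := hf
    rw [Polynomial.Monic, hPQ, Polynomial.leadingCoeff_mul] at this
    exact this
  -- generic claim: coefficients of R.comp (X+1) below natDegree R are even,
  -- for R ∈ {P, Q}
  have evencoeff : ∀ R : ℤ[X], R ≠ 0 → IsUnit R.leadingCoeff →
      (R.comp (X + 1)).map (Int.castRingHom (ZMod 2)) ∣ X ^ n →
      ∀ j < R.natDegree, (2:ℤ) ∣ (R.comp (X + 1)).coeff j := by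
    intro R hR0 hRlc hdvd j hj
    have hlcc : (R.comp (X + 1)).leadingCoeff = R.leadingCoeff := by
      rw [Polynomial.leadingCoeff_comp (by rw [hX1deg]; exact one_ne_zero)]
      have : (X + 1 : ℤ[X]).leadingCoeff = 1 := by
        have h := Polynomial.monic_X_add_C (1 : ℤ)
        simpa using h.leadingCoeff
      rw [this, one_pow, mul_one]
    have hlcz : (Int.castRingHom (ZMod 2)) (R.comp (X + 1)).leadingCoeff ≠ 0 := by
      rw [hlcc]
      rcases Int.isUnit_iff.mp hRlc with h | h <;> rw [h] <;> decide
    have hdm : ((R.comp (X + 1)).map (Int.castRingHom (ZMod 2))).natDegree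
        = (R.comp (X + 1)).natDegree :=
      Polynomial.natDegree_map_of_leadingCoeff_ne_zero _ hlcz
    have hcompdeg : (R.comp (X + 1)).natDegree = R.natDegree := by
      rw [Polynomial.natDegree_comp, hX1deg, mul_one]
    have hXpow := zmod2_dvd_pow_X _ _ hdvd
    rw [hdm, hcompdeg] at hXpow
    have hc : ((R.comp (X + 1)).coeff j : ZMod 2) = 0 := by
      have := congrArg (fun p => Polynomial.coeff p j) hXpow
      simp only [Polynomial.coeff_map] at this
      rw [Polynomial.coeff_X_pow, if_neg (by omega)] at this
      exact_mod_cast this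
    exact_mod_cast (ZMod.intCast_zmod_eq_zero_iff_dvd _ 2).mp hc
  have hlcP : IsUnit P.leadingCoeff := IsUnit.of_mul_eq_one _ hlc
  have hlcQ : IsUnit Q.leadingCoeff := IsUnit.of_mul_eq_one _ (by rw [mul_comm]; exact hlc)
  have hPdvd2 : (P.comp (X + 1)).map (Int.castRingHom (ZMod 2)) ∣ X ^ n :=
    ⟨(Q.comp (X + 1)).map (Int.castRingHom (ZMod 2)), by
      rw [← Polynomial.map_mul, ← hgPQ, hgmap]⟩
  have hQdvd2 : (Q.comp (X + 1)).map (Int.castRingHom (ZMod 2)) ∣ X ^ n :=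
    ⟨(P.comp (X + 1)).map (Int.castRingHom (ZMod 2)), by
      rw [← Polynomial.map_mul, mul_comm, ← hgPQ, hgmap]⟩
  have hPeven := evencoeff P hPne hlcP hPdvd2
  have hQeven := evencoeff Q hQne hlcQ hQdvd2
  -- conclude: g.coeff i0 ≡ 0 mod 4
  have h4 : (4:ℤ) ∣ g.coeff i0 := by
    rw [hgPQ, Polynomial.coeff_mul]
    apply Finset.dvd_sum
    intro x hx
    have hx' : x.1 + x.2 = i0 := Finset.HasAntidiagonal.mem_antidiagonal.mp hx
    obtain ⟨c, hc⟩ := hPeven x.1 (by omega)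
    obtain ⟨d, hd⟩ := hQeven x.2 (by omega)
    rw [hc, hd]
    exact ⟨c * d, by ring⟩
  omega
end
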